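/- arXiv:2207.13971 — 4 statements merged into one kernel-verified Lean document; each statement's English description precedes it below -/
import Mathlib

section
/- Let $\mathcal{H}$ be a Hilbert space and let $(V_n)_{n\geq 0}$ be a nested sequence of closed subspaces with $V_n \subset V_{n+1}$, generated as $V_n = \mathrm{span}\{v_{\lambda_1},\dots,v_{\lambda_n}\}$ for Riesz representers of functionals $\lambda_1,\lambda_2,\dots \in \mathcal{H}'$. For $u \in \mathcal{H}$ set $s_n := \Pi_{V_n}(u)$, $r_n := u - s_n$, and $P_n(\lambda) := \|v_\lambda - \Pi_{V_n}(v_\lambda)\|$. Then for every $n \geq 1$: $\left[ \prod_{i=n+1}^{2n} |\lambda_{i+1}(r_i)| \right]^{1/n} \leq n^{-1/2} \cdot \| u - s_{n+1} \|_{\mathcal{H}} \cdot \left[ \prod_{i=n+1}^{2n} P_{i}(\lambda_{i+1}) \right]^{1/n}$, provided $P_i(\lambda_{i+1}) \neq 0$ for the relevant indices. -/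
open scoped RealInnerProductSpace

/-- Product estimate for generalized greedy interpolation: with nested subspaces
`V n = span{v_{λ_1},…,v_{λ_n}}` of Riesz representers, projections `s n = Π_{V n} u`,
residuals `r_i = u - s i` and power function `P n λ = dist(v_λ, V n)`, it holds
`[∏_{i=n+1}^{2n} |λ_{i+1}(r_i)|]^{1/n} ≤ n^{-1/2} ‖u - s_{n+1}‖ [∏_{i=n+1}^{2n} P_i(λ_{i+1})]^{1/n}`. -/
theorem product_estimate_generalized_interpolation {H : Type*} [NormedAddCommGroup H]
    [InnerProductSpace ℝ H] [CompleteSpace H]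
    (lam : ℕ → StrongDual ℝ H) (u : H)
    (V : ℕ → Submodule ℝ H)
    (hV : ∀ n, V n = Submodule.span ℝ
      ((fun j => (InnerProductSpace.toDual ℝ H).symm (lam j)) '' Set.Icc 1 n))
    (s : ℕ → H)
    (hs : ∀ n, s n ∈ V n ∧ ∀ w ∈ V n, ⟪u - s n, w⟫ = 0)
    (P : ℕ → StrongDual ℝ H → ℝ)
    (hP : ∀ n l, P n l = Metric.infDist ((InnerProductSpace.toDual ℝ H).symm l)
      (V n : Set H))
    (n : ℕ) (hn : 1 ≤ n)
    (hPne : ∀ i ∈ Finset.Icc (n + 1) (2 * n), P i (lam (i + 1)) ≠ 0) :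
    (∏ i ∈ Finset.Icc (n + 1) (2 * n), |lam (i + 1) (u - s i)|) ^ ((n : ℝ)⁻¹)
      ≤ (n : ℝ) ^ (-(1 : ℝ) / 2) * ‖u - s (n + 1)‖ *
        (∏ i ∈ Finset.Icc (n + 1) (2 * n), P i (lam (i + 1))) ^ ((n : ℝ)⁻¹) := by
  classical
  set T := Finset.Icc (n + 1) (2 * n) with hT
  set v : ℕ → H := fun j => (InnerProductSpace.toDual ℝ H).symm (lam j) with hvdef
  have hmono : ∀ {i j : ℕ}, i ≤ j → V i ≤ V j := by
    intro i j hij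
    rw [hV i, hV j]
    exact Submodule.span_mono (Set.image_mono (Set.Icc_subset_Icc_right hij))
  have hfin : ∀ i, FiniteDimensional ℝ (V i) := fun i => by
    rw [hV i]
    exact FiniteDimensional.span_of_finite ℝ ((Set.finite_Icc 1 i).image _)
  have hop : ∀ i, (V i).HasOrthogonalProjection := fun i => by
    haveI := hfin i; infer_instance
  set q : ℕ → H := fun i => (@Submodule.orthogonalProjectionOnto ℝ H _ _ _ (V i) (hop i) (v (i + 1)) : H)
    with hqdef
  set w : ℕ → H := fun i => v (i + 1) - q i with hwdef
  have hqmem : ∀ i, q i ∈ V i := fun i => by rw [hqdef]; exact SetLike.coe_mem _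
  have hworth : ∀ i, w i ∈ (V i)ᗮ := fun i => by
    haveI := hop i; exact Submodule.sub_starProjection_mem_orthogonal (K := V i) (v (i + 1))
  have hvmem : ∀ i, v (i + 1) ∈ V (i + 1) := fun i => by
    rw [hV (i + 1)]
    exact Submodule.subset_span ⟨i + 1, ⟨Nat.succ_le_succ (Nat.zero_le i), le_refl _⟩, rfl⟩
  have hwmem : ∀ i, w i ∈ V (i + 1) :=
    fun i => Submodule.sub_mem _ (hvmem i) (hmono (Nat.le_succ i) (hqmem i))
  have hPw : ∀ i, P i (lam (i + 1)) = ‖w i‖ := fun i => by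
    haveI := hop i
    rw [hP, hwdef]
    show Metric.infDist (v (i + 1)) (V i : Set H)
      = ‖v (i + 1) - (V i).starProjection (v (i + 1))‖
    rw [Metric.infDist_eq_iInf, Submodule.starProjection_minimal]
    simp [dist_eq_norm]
  set m := u - s (n + 1) with hm
  -- key identity
  have hkey : ∀ i ∈ T, lam (i + 1) (u - s i) = ⟪w i, m⟫ := by
    intro i hi
    obtain ⟨hi1, _⟩ := Finset.mem_Icc.mp hi
    have h2 : ⟪q i, u - s i⟫ = 0 := by
      rw [real_inner_comm]; exact (hs i).2 (q i) (hqmem i)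
    have h3 : ⟪w i, s (n + 1) - s i⟫ = 0 := by
      have hmem : s (n + 1) - s i ∈ V i :=
        Submodule.sub_mem _ (hmono hi1 (hs (n + 1)).1) (hs i).1
      rw [real_inner_comm]
      exact ((Submodule.mem_orthogonal _ _).mp (hworth i)) _ hmem
    have hsplit : u - s i = m + (s (n + 1) - s i) := by rw [hm]; abel
    have hwq : v (i + 1) = w i + q i := by rw [hwdef]; simp
    calc lam (i + 1) (u - s i) = ⟪v (i + 1), u - s i⟫ :=
          (InnerProductSpace.toDual_symm_apply).symm
      _ = ⟪w i + q i, u - s i⟫ := by rw [← hwq]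
      _ = ⟪w i, u - s i⟫ := by rw [inner_add_left, h2, add_zero]
      _ = ⟪w i, m + (s (n + 1) - s i)⟫ := by rw [← hsplit]
      _ = ⟪w i, m⟫ := by rw [inner_add_right, h3, add_zero]
  -- orthogonality of the w's
  have hww : ∀ i j : ℕ, i < j → ⟪w i, w j⟫ = 0 := fun i j hij =>
    ((Submodule.mem_orthogonal _ _).mp (hworth j)) _ (hmono hij (hwmem i))
  have hwne : ∀ i ∈ T, w i ≠ 0 := fun i hi h0 =>
    hPne i hi (by rw [hPw i, h0, norm_zero])
  have horth : Orthonormal ℝ (fun i : T => ‖w (i : ℕ)‖⁻¹ • w (i : ℕ)) := by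
    constructor
    · intro i
      rw [norm_smul, norm_inv, norm_norm]
      exact inv_mul_cancel₀ (norm_ne_zero_iff.mpr (hwne i i.2))
    · intro i j hij
      have hij' : (i : ℕ) ≠ (j : ℕ) := fun h => hij (Subtype.ext h)
      have hz : ⟪w (i : ℕ), w (j : ℕ)⟫ = 0 := by
        rcases lt_or_gt_of_ne hij' with h | h
        · exact hww _ _ h
        · rw [real_inner_comm]; exact hww _ _ h
      rw [real_inner_smul_left, real_inner_smul_right, hz, mul_zero, mul_zero]
  set c : ℕ → ℝ := fun i => ⟪‖w i‖⁻¹ • w i, m⟫ with hc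
  -- Bessel
  have hsum : ∑ i ∈ T, c i ^ 2 ≤ ‖m‖ ^ 2 := by
    have h := horth.sum_inner_products_le m (s := Finset.univ)
    rw [← Finset.sum_coe_sort T (fun i => c i ^ 2)]
    simpa [hc, Real.norm_eq_abs, sq_abs] using h
  -- rewrite each factor
  have habs : ∀ i ∈ T, |lam (i + 1) (u - s i)| = P i (lam (i + 1)) * |c i| := by
    intro i hi
    have hc' : ⟪w i, m⟫ = ‖w i‖ * c i := by
      rw [hc]
      simp only [real_inner_smul_left]
      rw [← mul_assoc, mul_inv_cancel₀ (norm_ne_zero_iff.mpr (hwne i hi)), one_mul]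
    rw [hkey i hi, hPw i, hc', abs_mul, abs_of_nonneg (norm_nonneg _)]
  have hprodeq : (∏ i ∈ T, |lam (i + 1) (u - s i)|)
      = (∏ i ∈ T, P i (lam (i + 1))) * ∏ i ∈ T, |c i| := by
    rw [← Finset.prod_mul_distrib]
    exact Finset.prod_congr rfl habs
  have hcard : T.card = n := by rw [hT, Nat.card_Icc]; omega
  have hn0 : (n : ℝ) ≠ 0 := Nat.cast_ne_zero.mpr (by omega)
  -- AM-GM
  have hAM : ∏ i ∈ T, (|c i| ^ 2) ^ ((n : ℝ)⁻¹) ≤ (n : ℝ)⁻¹ * ∑ i ∈ T, c i ^ 2 := by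
    have h := Real.geom_mean_le_arith_mean_weighted T (fun _ => (n : ℝ)⁻¹)
      (fun i => |c i| ^ 2) (fun _ _ => by positivity)
      (by rw [Finset.sum_const, hcard, nsmul_eq_mul, mul_inv_cancel₀ hn0])
      (fun i _ => by positivity)
    simpa [← Finset.mul_sum, sq_abs] using h
  set A := ∏ i ∈ T, |c i| with hA
  have hAnn : (0 : ℝ) ≤ A := Finset.prod_nonneg fun i _ => abs_nonneg _
  have h1 : (A ^ ((n : ℝ)⁻¹)) ^ (2 : ℕ) = ∏ i ∈ T, (|c i| ^ 2) ^ ((n : ℝ)⁻¹) := by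
    rw [Real.finset_prod_rpow _ _ (fun i _ => sq_nonneg _), Finset.prod_pow, ← hA,
      ← Real.rpow_natCast A 2, ← Real.rpow_natCast (A ^ ((n : ℝ)⁻¹)) 2,
      ← Real.rpow_mul hAnn, ← Real.rpow_mul hAnn, mul_comm]
  have hrhs : ((n : ℝ) ^ (-(1 : ℝ) / 2) * ‖m‖) ^ (2 : ℕ) = (n : ℝ)⁻¹ * ‖m‖ ^ 2 := by
    rw [mul_pow, ← Real.rpow_natCast ((n : ℝ) ^ (-(1 : ℝ) / 2)) 2,
      ← Real.rpow_mul (Nat.cast_nonneg n)]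
    norm_num [Real.rpow_neg_one]
  have hfinal : A ^ ((n : ℝ)⁻¹) ≤ (n : ℝ) ^ (-(1 : ℝ) / 2) * ‖m‖ := by
    refine le_of_pow_le_pow_left₀ two_ne_zero (by positivity) ?_
    rw [h1, hrhs]
    exact hAM.trans (mul_le_mul_of_nonneg_left hsum (by positivity))
  have hPnn : ∀ i ∈ T, (0 : ℝ) ≤ P i (lam (i + 1)) := fun i _ => by
    rw [hPw]; exact norm_nonneg _
  have hPprod : (0 : ℝ) ≤ ∏ i ∈ T, P i (lam (i + 1)) := Finset.prod_nonneg hPnn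
  calc (∏ i ∈ T, |lam (i + 1) (u - s i)|) ^ ((n : ℝ)⁻¹)
      = ((∏ i ∈ T, P i (lam (i + 1))) * A) ^ ((n : ℝ)⁻¹) := by rw [hprodeq]
    _ = (∏ i ∈ T, P i (lam (i + 1))) ^ ((n : ℝ)⁻¹) * A ^ ((n : ℝ)⁻¹) :=
        Real.mul_rpow hPprod hAnn
    _ ≤ (∏ i ∈ T, P i (lam (i + 1))) ^ ((n : ℝ)⁻¹) * ((n : ℝ) ^ (-(1 : ℝ) / 2) * ‖m‖) :=
        mul_le_mul_of_nonneg_left hfinal (Real.rpow_nonneg hPprod _)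
    _ = (n : ℝ) ^ (-(1 : ℝ) / 2) * ‖m‖ * (∏ i ∈ T, P i (lam (i + 1))) ^ ((n : ℝ)⁻¹) := by
        ring
end

section
/- Let $\mathcal{H}$ be a Hilbert space and consider a PDE-$\beta$-greedy algorithm with $\beta \in (0,1]$ applied to $u \in \mathcal{H}$ with functional set $\Lambda$. With residuals $r_i$ and power functions $P_i$ as usual, it holds for $n \geq 1$: $\left[ \prod_{i=n+1}^{2n} \sup_{\lambda \in \Lambda} |\lambda(r_i)| \right]^{1/n} \leq n^{-\beta/2} \cdot \| r_{n+1} \|_{\mathcal{H}} \cdot \left[ \prod_{i=n+1}^{2n} P_{i}(\lambda_{i+1}) \right]^{1/n}$. -/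
open scoped RealInnerProductSpace

private lemma abs_le_infDist_mul {H : Type*} [NormedAddCommGroup H] [InnerProductSpace ℝ H]
    (v : H) (S : Submodule ℝ H) {x C : ℝ} (hC : 0 ≤ C)
    (h : ∀ w ∈ S, |x| ≤ ‖v - w‖ * C) : |x| ≤ Metric.infDist v (S : Set H) * C := by
  rcases eq_or_lt_of_le hC with hC0 | hCpos
  · have h0 := h 0 S.zero_mem
    rw [← hC0, mul_zero] at h0 ⊢
    exact h0
  · rw [← div_le_iff₀ hCpos]
    have : Nonempty ↥(S : Set H) := ⟨⟨0, S.zero_mem⟩⟩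
    rw [Metric.infDist_eq_iInf]
    refine le_ciInf fun y => ?_
    rw [div_le_iff₀ hCpos, dist_eq_norm]
    exact h y y.2

/-- Convergence estimate for PDE-β-greedy algorithms with `β ∈ (0,1]`:
`[∏_{i=n+1}^{2n} sup_{λ∈Λ}|λ(r_i)|]^{1/n} ≤ n^{-β/2} ‖r_{n+1}‖ [∏_{i=n+1}^{2n} P_i(λ_{i+1})]^{1/n}`. -/
theorem pde_beta_greedy_product_bound {H : Type*} [NormedAddCommGroup H]
    [InnerProductSpace ℝ H] [CompleteSpace H]
    (Λ : Set (StrongDual ℝ H)) (u : H)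
    (lam : ℕ → StrongDual ℝ H) (hmem : ∀ i, lam i ∈ Λ)
    (V : ℕ → Submodule ℝ H)
    (hV : ∀ n, V n = Submodule.span ℝ
      ((fun j => (InnerProductSpace.toDual ℝ H).symm (lam j)) '' Set.Icc 1 n))
    (s : ℕ → H)
    (hs : ∀ n, s n ∈ V n ∧ ∀ w ∈ V n, ⟪u - s n, w⟫ = 0)
    (P : ℕ → StrongDual ℝ H → ℝ)
    (hP : ∀ n l, P n l = Metric.infDist ((InnerProductSpace.toDual ℝ H).symm l)
      (V n : Set H))
    (β : ℝ) (hβ : β ∈ Set.Ioc (0 : ℝ) 1)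
    (hgreedy : ∀ i, ∀ l ∈ Λ, |l (u - s i)| ^ β * P i l ^ (1 - β)
      ≤ |lam (i + 1) (u - s i)| ^ β * P i (lam (i + 1)) ^ (1 - β))
    (hattain : ∀ i, ∃ l₀ ∈ Λ, ∀ l ∈ Λ, |l (u - s i)| ≤ |l₀ (u - s i)|)
    (n : ℕ) (hn : 1 ≤ n)
    (hPne : ∀ i ∈ Finset.Icc (n + 1) (2 * n), P i (lam (i + 1)) ≠ 0) :
    (∏ i ∈ Finset.Icc (n + 1) (2 * n),
        ⨆ l : Λ, |(l : StrongDual ℝ H) (u - s i)|) ^ ((n : ℝ)⁻¹)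
      ≤ (n : ℝ) ^ (-β / 2) * ‖u - s (n + 1)‖ *
        (∏ i ∈ Finset.Icc (n + 1) (2 * n), P i (lam (i + 1))) ^ ((n : ℝ)⁻¹) := by
  obtain ⟨hβ0, hβ1⟩ := hβ
  have h1β : (0:ℝ) ≤ 1 - β := by linarith
  set I := Finset.Icc (n + 1) (2 * n) with hI
  have hnR : (0:ℝ) < (n:ℝ) := by exact_mod_cast hn
  have hnne : (n:ℝ) ≠ 0 := ne_of_gt hnR
  have hcard : I.card = n := by rw [hI, Nat.card_Icc]; omega
  -- basic structural facts
  have hVmono : ∀ i, V i ≤ V (i + 1) := by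
    intro i
    rw [hV i, hV (i + 1)]
    exact Submodule.span_mono (Set.image_mono (Set.Icc_subset_Icc_right (Nat.le_succ i)))
  have hortho : ∀ i, ∀ w ∈ V i, ⟪u - s i, w⟫ = 0 := fun i => (hs i).2
  have hdelta_mem : ∀ i, s (i + 1) - s i ∈ V (i + 1) := fun i =>
    Submodule.sub_mem _ (hs (i + 1)).1 (hVmono i (hs i).1)
  have hPnonneg : ∀ i l, 0 ≤ P i l := by
    intro i l; rw [hP]; exact Metric.infDist_nonneg
  -- Lemma A: |l(r_i)| ≤ P_i(l) ‖r_i‖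
  have lemA : ∀ i (l : StrongDual ℝ H), |l (u - s i)| ≤ P i l * ‖u - s i‖ := by
    intro i l
    rw [hP]
    refine abs_le_infDist_mul _ _ (norm_nonneg _) ?_
    intro w hw
    have h1 : ⟪(InnerProductSpace.toDual ℝ H).symm l - w, u - s i⟫ = l (u - s i) := by
      rw [inner_sub_left, InnerProductSpace.toDual_symm_apply, real_inner_comm (u - s i) w,
        hortho i w hw, sub_zero]
    rw [← h1]
    exact abs_real_inner_le_norm _ _
  -- Lemma C: |λ_{i+1}(r_i)| ≤ P_i(λ_{i+1}) ‖s_{i+1} - s_i‖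
  have lemC : ∀ i, |lam (i + 1) (u - s i)| ≤ P i (lam (i + 1)) * ‖s (i + 1) - s i‖ := by
    intro i
    rw [hP]
    refine abs_le_infDist_mul _ _ (norm_nonneg _) ?_
    intro w hw
    set v := (InnerProductSpace.toDual ℝ H).symm (lam (i + 1)) with hv
    have hvmem : v ∈ V (i + 1) := by
      rw [hV (i + 1)]
      exact Submodule.subset_span ⟨i + 1, Set.mem_Icc.mpr ⟨Nat.le_add_left 1 i, le_rfl⟩, rfl⟩
    have h1 : ⟪v - w, u - s i⟫ = lam (i + 1) (u - s i) := by
      rw [inner_sub_left, hv, InnerProductSpace.toDual_symm_apply, real_inner_comm (u - s i) w,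
        hortho i w hw, sub_zero]
    have h2 : ⟪v - w, u - s i⟫ = ⟪v - w, s (i + 1) - s i⟫ := by
      have hsplit : u - s i = (u - s (i + 1)) + (s (i + 1) - s i) := by abel
      rw [hsplit, inner_add_right, real_inner_comm (u - s (i + 1)) (v - w),
        hortho (i + 1) _ (Submodule.sub_mem _ hvmem (hVmono i hw)), zero_add]
    rw [← h1, h2]
    exact abs_real_inner_le_norm _ _
  -- Lemma D: Pythagoras
  have lemD : ∀ i, ‖u - s i‖ ^ 2 = ‖u - s (i + 1)‖ ^ 2 + ‖s (i + 1) - s i‖ ^ 2 := by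
    intro i
    have hsplit : u - s i = (u - s (i + 1)) + (s (i + 1) - s i) := by abel
    have hinner : ⟪u - s (i + 1), s (i + 1) - s i⟫ = 0 := hortho (i + 1) _ (hdelta_mem i)
    rw [hsplit, norm_add_sq_real, hinner]
    ring
  -- monotonicity of residual norms
  have hmono : ∀ i j : ℕ, i ≤ j → ‖u - s j‖ ≤ ‖u - s i‖ := by
    intro i j hij
    induction j, hij using Nat.le_induction with
    | base => exact le_rfl
    | succ m hm ih =>
      refine le_trans ?_ ih
      nlinarith [lemD m, norm_nonneg (u - s (m + 1)), norm_nonneg (u - s m),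
        sq_nonneg ‖s (m + 1) - s m‖]
  -- telescoping sum
  have hteles : ∀ m, n ≤ m →
      (∑ i ∈ Finset.Icc (n + 1) m, ‖s (i + 1) - s i‖ ^ 2) + ‖u - s (m + 1)‖ ^ 2
        = ‖u - s (n + 1)‖ ^ 2 := by
    intro m hm
    induction m, hm using Nat.le_induction with
    | base =>
      rw [Finset.Icc_eq_empty_of_lt (Nat.lt_succ_self n), Finset.sum_empty, zero_add]
    | succ m hm ih =>
      rw [Finset.sum_Icc_succ_top (by omega : n + 1 ≤ m + 1)]
      have := lemD (m + 1)
      linarith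
  have hsumle : (∑ i ∈ I, ‖s (i + 1) - s i‖ ^ 2) ≤ ‖u - s (n + 1)‖ ^ 2 := by
    have := hteles (2 * n) (by omega)
    nlinarith [sq_nonneg ‖u - s (2 * n + 1)‖]
  -- notation
  set ρ := ‖u - s (n + 1)‖ with hρ
  have hρ0 : 0 ≤ ρ := norm_nonneg _
  set d : ℕ → ℝ := fun i => ‖s (i + 1) - s i‖ with hd
  have hd0 : ∀ i, 0 ≤ d i := fun i => norm_nonneg _
  set p : ℕ → ℝ := fun i => P i (lam (i + 1)) with hpdef
  have hppos : ∀ i ∈ I, 0 < p i := fun i hi =>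
    lt_of_le_of_ne (hPnonneg i _) (Ne.symm (hPne i hi))
  -- key per-index estimate
  have hkey : ∀ i ∈ I, (⨆ l : Λ, |(l : StrongDual ℝ H) (u - s i)|)
      ≤ p i * d i ^ β * ρ ^ (1 - β) := by
    intro i hi
    obtain ⟨l₀, hl₀, hmax⟩ := hattain i
    haveI : Nonempty Λ := ⟨⟨l₀, hl₀⟩⟩
    have hbdd : BddAbove (Set.range fun l : Λ => |(l : StrongDual ℝ H) (u - s i)|) := by
      refine ⟨|l₀ (u - s i)|, ?_⟩
      rintro x ⟨l, rfl⟩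
      exact hmax l l.2
    have hsup_le : (⨆ l : Λ, |(l : StrongDual ℝ H) (u - s i)|) ≤ |l₀ (u - s i)| :=
      ciSup_le fun l => hmax l l.2
    refine hsup_le.trans ?_
    set A := |l₀ (u - s i)| with hA
    set B := |lam (i + 1) (u - s i)| with hB
    have hA0 : 0 ≤ A := abs_nonneg _
    have hB0 : 0 ≤ B := abs_nonneg _
    have hin : n + 1 ≤ i := (Finset.mem_Icc.mp hi).1
    have hri : ‖u - s i‖ ≤ ρ := hmono (n + 1) i hin
    have step1 : A ≤ B ^ β * p i ^ (1 - β) * ρ ^ (1 - β) := by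
      rcases eq_or_lt_of_le hA0 with hA0' | hApos
      · rw [← hA0']
        exact mul_nonneg (mul_nonneg (Real.rpow_nonneg hB0 _)
          (Real.rpow_nonneg (hPnonneg i _) _)) (Real.rpow_nonneg hρ0 _)
      · have hsplitA : A = A ^ β * A ^ (1 - β) := by
          rw [← Real.rpow_add hApos, add_sub_cancel, Real.rpow_one]
        calc A = A ^ β * A ^ (1 - β) := hsplitA
          _ ≤ A ^ β * (P i l₀ * ‖u - s i‖) ^ (1 - β) := by
              refine mul_le_mul_of_nonneg_left ?_ (Real.rpow_nonneg hA0 _)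
              exact Real.rpow_le_rpow hA0 (lemA i l₀) h1β
          _ = A ^ β * P i l₀ ^ (1 - β) * ‖u - s i‖ ^ (1 - β) := by
              rw [Real.mul_rpow (hPnonneg i l₀) (norm_nonneg _), mul_assoc]
          _ ≤ B ^ β * p i ^ (1 - β) * ‖u - s i‖ ^ (1 - β) := by
              refine mul_le_mul_of_nonneg_right ?_ (Real.rpow_nonneg (norm_nonneg _) _)
              exact hgreedy i l₀ hl₀
          _ ≤ B ^ β * p i ^ (1 - β) * ρ ^ (1 - β) := by
              refine mul_le_mul_of_nonneg_left ?_
                (mul_nonneg (Real.rpow_nonneg hB0 _) (Real.rpow_nonneg (hPnonneg i _) _))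
              exact Real.rpow_le_rpow (norm_nonneg _) hri h1β
    have step2 : B ^ β ≤ p i ^ β * d i ^ β := by
      rw [← Real.mul_rpow (hPnonneg i _) (hd0 i)]
      exact Real.rpow_le_rpow hB0 (lemC i) (le_of_lt hβ0)
    have hpcomb : p i ^ β * p i ^ (1 - β) = p i := by
      rw [← Real.rpow_add (hppos i hi), add_sub_cancel, Real.rpow_one]
    calc A ≤ B ^ β * p i ^ (1 - β) * ρ ^ (1 - β) := step1
      _ ≤ p i ^ β * d i ^ β * p i ^ (1 - β) * ρ ^ (1 - β) := by
          refine mul_le_mul_of_nonneg_right (mul_le_mul_of_nonneg_right step2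
            (Real.rpow_nonneg (hPnonneg i _) _)) (Real.rpow_nonneg hρ0 _)
      _ = p i * d i ^ β * ρ ^ (1 - β) := by
          rw [show p i ^ β * d i ^ β * p i ^ (1 - β) = p i ^ β * p i ^ (1 - β) * d i ^ β by ring,
            hpcomb]
  -- the sup is nonnegative
  have hsup_nonneg : ∀ i, 0 ≤ (⨆ l : Λ, |(l : StrongDual ℝ H) (u - s i)|) := by
    intro i
    obtain ⟨l₀, hl₀, hmax⟩ := hattain i
    haveI : Nonempty Λ := ⟨⟨l₀, hl₀⟩⟩
    have hbdd : BddAbove (Set.range fun l : Λ => |(l : StrongDual ℝ H) (u - s i)|) := by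
      refine ⟨|l₀ (u - s i)|, ?_⟩
      rintro x ⟨l, rfl⟩
      exact hmax l l.2
    exact le_trans (abs_nonneg _) (le_ciSup hbdd (⟨l₀, hl₀⟩ : Λ))
  -- product estimate
  have hprod : (∏ i ∈ I, ⨆ l : Λ, |(l : StrongDual ℝ H) (u - s i)|)
      ≤ (∏ i ∈ I, p i) * (∏ i ∈ I, d i) ^ β * ρ ^ ((1 - β) * n) := by
    calc (∏ i ∈ I, ⨆ l : Λ, |(l : StrongDual ℝ H) (u - s i)|)
        ≤ ∏ i ∈ I, (p i * d i ^ β * ρ ^ (1 - β)) :=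
          Finset.prod_le_prod (fun i _ => hsup_nonneg i) hkey
      _ = (∏ i ∈ I, p i) * (∏ i ∈ I, d i ^ β) * (∏ _i ∈ I, ρ ^ (1 - β)) := by
          rw [Finset.prod_mul_distrib, Finset.prod_mul_distrib]
      _ = (∏ i ∈ I, p i) * (∏ i ∈ I, d i) ^ β * ρ ^ ((1 - β) * n) := by
          rw [Real.finset_prod_rpow I d (fun i _ => hd0 i) β, Finset.prod_const, hcard,
            ← Real.rpow_natCast (ρ ^ (1 - β)) n, ← Real.rpow_mul hρ0]
  set D := ∏ i ∈ I, d i with hD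
  have hD0 : 0 ≤ D := Finset.prod_nonneg fun i _ => hd0 i
  have hp0 : 0 ≤ ∏ i ∈ I, p i := Finset.prod_nonneg fun i _ => hPnonneg i _
  -- AM-GM: D ^ (2/n) ≤ ρ^2 * n⁻¹
  have hamgm : D ^ (2 * (n : ℝ)⁻¹) ≤ ρ ^ 2 * (n : ℝ)⁻¹ := by
    have hgm := Real.geom_mean_le_arith_mean_weighted I (fun _ => (n : ℝ)⁻¹)
      (fun i => d i ^ 2) (fun i _ => by positivity)
      (by rw [Finset.sum_const, hcard, nsmul_eq_mul, mul_inv_cancel₀ hnne])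
      (fun i _ => sq_nonneg _)
    have hleft : (∏ i ∈ I, (d i ^ 2) ^ ((n : ℝ)⁻¹)) = D ^ (2 * (n : ℝ)⁻¹) := by
      rw [← Real.finset_prod_rpow I d (fun i _ => hd0 i) (2 * (n : ℝ)⁻¹)]
      refine Finset.prod_congr rfl fun i _ => ?_
      rw [← Real.rpow_natCast (d i) 2, ← Real.rpow_mul (hd0 i)]
      norm_num
    have hright : (∑ i ∈ I, (n : ℝ)⁻¹ * d i ^ 2) ≤ ρ ^ 2 * (n : ℝ)⁻¹ := by
      rw [← Finset.mul_sum, mul_comm]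
      exact mul_le_mul_of_nonneg_right hsumle (by positivity)
    calc D ^ (2 * (n : ℝ)⁻¹) = ∏ i ∈ I, (d i ^ 2) ^ ((n : ℝ)⁻¹) := hleft.symm
      _ ≤ ∑ i ∈ I, (n : ℝ)⁻¹ * d i ^ 2 := hgm
      _ ≤ ρ ^ 2 * (n : ℝ)⁻¹ := hright
  -- raise AM-GM to power β/2
  have hDbound : D ^ (β * (n : ℝ)⁻¹) ≤ ρ ^ β * (n : ℝ) ^ (-β / 2) := by
    have h1 : D ^ (β * (n : ℝ)⁻¹) = (D ^ (2 * (n : ℝ)⁻¹)) ^ (β / 2) := by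
      rw [← Real.rpow_mul hD0]
      ring_nf
    have h2 : (D ^ (2 * (n : ℝ)⁻¹)) ^ (β / 2) ≤ (ρ ^ 2 * (n : ℝ)⁻¹) ^ (β / 2) :=
      Real.rpow_le_rpow (Real.rpow_nonneg hD0 _) hamgm (by positivity)
    have h3 : (ρ ^ 2 * (n : ℝ)⁻¹) ^ (β / 2) = ρ ^ β * (n : ℝ) ^ (-β / 2) := by
      rw [Real.mul_rpow (by positivity) (by positivity), Real.inv_rpow (le_of_lt hnR),
        ← Real.rpow_neg (le_of_lt hnR), ← Real.rpow_natCast ρ 2, ← Real.rpow_mul hρ0]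
      norm_num
      rw [show (2:ℝ) * (β / 2) = β by ring, neg_div]
    rw [h1, ← h3]
    exact h2
  -- final assembly
  have hρcomb : ρ ^ β * ρ ^ (1 - β) = ρ := by
    rw [← Real.rpow_add' hρ0 (by norm_num), add_sub_cancel, Real.rpow_one]
  calc (∏ i ∈ I, ⨆ l : Λ, |(l : StrongDual ℝ H) (u - s i)|) ^ ((n : ℝ)⁻¹)
      ≤ ((∏ i ∈ I, p i) * D ^ β * ρ ^ ((1 - β) * n)) ^ ((n : ℝ)⁻¹) :=
        Real.rpow_le_rpow (Finset.prod_nonneg fun i _ => hsup_nonneg i) hprod (by positivity)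
    _ = (∏ i ∈ I, p i) ^ ((n : ℝ)⁻¹) * D ^ (β * (n : ℝ)⁻¹) * ρ ^ (1 - β) := by
        rw [Real.mul_rpow (by positivity) (by positivity),
          Real.mul_rpow hp0 (Real.rpow_nonneg hD0 _), ← Real.rpow_mul hD0,
          ← Real.rpow_mul hρ0, mul_assoc (1 - β), mul_inv_cancel₀ hnne, mul_one]
    _ ≤ (∏ i ∈ I, p i) ^ ((n : ℝ)⁻¹) * (ρ ^ β * (n : ℝ) ^ (-β / 2)) * ρ ^ (1 - β) := by
        refine mul_le_mul_of_nonneg_right (mul_le_mul_of_nonneg_left hDbound ?_) ?_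
        · positivity
        · positivity
    _ = (n : ℝ) ^ (-β / 2) * ρ * (∏ i ∈ I, p i) ^ ((n : ℝ)⁻¹) := by
        rw [show (∏ i ∈ I, p i) ^ ((n : ℝ)⁻¹) * (ρ ^ β * (n : ℝ) ^ (-β / 2)) * ρ ^ (1 - β)
          = (n : ℝ) ^ (-β / 2) * (ρ ^ β * ρ ^ (1 - β)) * (∏ i ∈ I, p i) ^ ((n : ℝ)⁻¹) by ring,
          hρcomb]
end

section
/- Let $\mathcal{H}$ be a Hilbert space and consider a PDE-$\beta$-greedy algorithm with $\beta \in (1,\infty)$ applied to $u \in \mathcal{H}$ with functional set $\Lambda$, where additionally $\sup_{\lambda \in \Lambda} P_i(\lambda) \leq 1$ for all $i$. Then for $n \geq 1$: $\left[ \prod_{i=n+1}^{2n} \sup_{\lambda \in \Lambda} |\lambda(r_i)| \right]^{1/n} \leq n^{-1/2} \cdot \| r_{n+1} \|_{\mathcal{H}} \cdot \left[ \prod_{i=n+1}^{2n} P_{i}(\lambda_{i+1})^{1/\beta} \right]^{1/n}$. -/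
open scoped RealInnerProductSpace

private lemma sum_Icc_telescope' (f : ℕ → ℝ) (a m : ℕ) :
    ∑ i ∈ Finset.Icc a (a + m), (f i - f (i + 1)) = f a - f (a + m + 1) := by
  induction m with
  | zero => simp
  | succ k ih =>
      rw [show a + (k + 1) = (a + k) + 1 from rfl,
        Finset.sum_Icc_succ_top (by omega : a ≤ a + k + 1), ih]
      ring

/-- Convergence estimate for PDE-β-greedy algorithms with `β ∈ (1,∞)` under the
normalization `sup_{λ∈Λ} P_i(λ) ≤ 1`:
`[∏_{i=n+1}^{2n} sup_{λ∈Λ}|λ(r_i)|]^{1/n} ≤ n^{-1/2} ‖r_{n+1}‖ [∏_{i=n+1}^{2n} P_i(λ_{i+1})^{1/β}]^{1/n}`. -/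
theorem pde_beta_greedy_product_bound_large_beta {H : Type*} [NormedAddCommGroup H]
    [InnerProductSpace ℝ H] [CompleteSpace H]
    (Λ : Set (StrongDual ℝ H)) (u : H)
    (lam : ℕ → StrongDual ℝ H) (hmem : ∀ i, lam i ∈ Λ)
    (V : ℕ → Submodule ℝ H)
    (hV : ∀ n, V n = Submodule.span ℝ
      ((fun j => (InnerProductSpace.toDual ℝ H).symm (lam j)) '' Set.Icc 1 n))
    (s : ℕ → H)
    (hs : ∀ n, s n ∈ V n ∧ ∀ w ∈ V n, ⟪u - s n, w⟫ = 0)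
    (P : ℕ → StrongDual ℝ H → ℝ)
    (hP : ∀ n l, P n l = Metric.infDist ((InnerProductSpace.toDual ℝ H).symm l)
      (V n : Set H))
    (β : ℝ) (hβ : 1 < β)
    (hgreedy : ∀ i, ∀ l ∈ Λ, |l (u - s i)| ^ β * P i l ^ (1 - β)
      ≤ |lam (i + 1) (u - s i)| ^ β * P i (lam (i + 1)) ^ (1 - β))
    (hattain : ∀ i, ∃ l₀ ∈ Λ, ∀ l ∈ Λ, |l (u - s i)| ≤ |l₀ (u - s i)|)
    (hPle1 : ∀ i, ∀ l ∈ Λ, P i l ≤ 1)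
    (n : ℕ) (hn : 1 ≤ n)
    (hPne : ∀ i ∈ Finset.Icc (n + 1) (2 * n), P i (lam (i + 1)) ≠ 0) :
    (∏ i ∈ Finset.Icc (n + 1) (2 * n),
        ⨆ l : Λ, |(l : StrongDual ℝ H) (u - s i)|) ^ ((n : ℝ)⁻¹)
      ≤ (n : ℝ) ^ (-(1 : ℝ) / 2) * ‖u - s (n + 1)‖ *
        (∏ i ∈ Finset.Icc (n + 1) (2 * n), P i (lam (i + 1)) ^ (1 / β)) ^ ((n : ℝ)⁻¹) := by
  classical
  have hβ0 : (0 : ℝ) < β := lt_trans one_pos hβ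
  haveI : Nonempty Λ := ⟨⟨lam 0, hmem 0⟩⟩
  have hn0 : (n : ℝ) ≠ 0 := by positivity
  have hnpos : (0 : ℝ) < n := by positivity
  have hfd : ∀ m, FiniteDimensional ℝ (V m) := fun m => by
    rw [hV m]
    exact FiniteDimensional.span_of_finite ℝ ((Set.finite_Icc 1 m).image _)
  -- minimality of the projection
  have hmin : ∀ m, ∀ z ∈ V m, ‖u - s m‖ ≤ ‖u - z‖ := by
    intro m z hz
    have h1 : ⟪u - s m, s m - z⟫ = 0 := (hs m).2 _ (Submodule.sub_mem _ (hs m).1 hz)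
    have h2 : u - z = (u - s m) + (s m - z) := by abel
    have h3 : ‖u - z‖ ^ 2 = ‖u - s m‖ ^ 2 + ‖s m - z‖ ^ 2 := by
      rw [h2, norm_add_sq_real, h1]; ring
    nlinarith [norm_nonneg (u - z), norm_nonneg (u - s m), norm_nonneg (s m - z)]
  have hVmono : ∀ m, V m ≤ V (m + 1) := fun m => by
    rw [hV m, hV (m + 1)]
    exact Submodule.span_mono (Set.image_mono (Set.Icc_subset_Icc_right (Nat.le_succ m)))
  have hrmono : ∀ m, ‖u - s (m + 1)‖ ≤ ‖u - s m‖ := fun m =>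
    hmin (m + 1) (s m) (hVmono m (hs m).1)
  have hc0 : ∀ m, 0 ≤ ‖u - s m‖ ^ 2 - ‖u - s (m + 1)‖ ^ 2 := fun m => by
    nlinarith [hrmono m, norm_nonneg (u - s (m + 1))]
  have hPnonneg : ∀ i l, 0 ≤ P i l := fun i l => by
    rw [hP]; exact Metric.infDist_nonneg
  -- key energy inequality
  have hkey : ∀ i, (lam (i + 1) (u - s i)) ^ 2
      ≤ (P i (lam (i + 1))) ^ 2 * (‖u - s i‖ ^ 2 - ‖u - s (i + 1)‖ ^ 2) := by
    intro i
    haveI := hfd i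
    set v : H := (InnerProductSpace.toDual ℝ H).symm (lam (i + 1)) with hv
    set q : H := (Submodule.orthogonalProjectionOnto (V i) v : H) with hq
    set d : H := v - q with hd
    have hPd : P i (lam (i + 1)) = ‖d‖ := by
      rw [hP, Metric.infDist_eq_iInf, hd, hq, Submodule.coe_orthogonalProjectionOnto_apply, Submodule.starProjection_minimal v]
      exact iInf_congr fun y => dist_eq_norm _ _
    have hqmem : q ∈ V i := (Submodule.orthogonalProjectionOnto (V i) v).2
    have hlm : lam (i + 1) (u - s i) = ⟪u - s i, d⟫ := by
      have h2 : ⟪v, u - s i⟫ = lam (i + 1) (u - s i) :=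
        InnerProductSpace.toDual_symm_apply
      have h1 : ⟪u - s i, q⟫ = 0 := (hs i).2 _ hqmem
      rw [← h2, real_inner_comm, hd, inner_sub_right, h1, sub_zero]
    by_cases hd0 : d = 0
    · rw [hlm, hd0, inner_zero_right]
      nlinarith [sq_nonneg (P i (lam (i + 1))), hc0 i]
    · have hdn : (0 : ℝ) < ‖d‖ := norm_pos_iff.mpr hd0
      have hdn2 : (0 : ℝ) < ‖d‖ ^ 2 := by positivity
      set c : ℝ := ⟪u - s i, d⟫ with hcdef
      have hvmem : v ∈ V (i + 1) := by
        rw [hV (i + 1)]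
        exact Submodule.subset_span ⟨i + 1, ⟨Nat.succ_le_succ (Nat.zero_le i), le_rfl⟩, rfl⟩
      have hdmem : d ∈ V (i + 1) := Submodule.sub_mem _ hvmem (hVmono i hqmem)
      have hzmem : s i + (c / ‖d‖ ^ 2) • d ∈ V (i + 1) :=
        Submodule.add_mem _ (hVmono i (hs i).1) (Submodule.smul_mem _ _ hdmem)
      have hle := hmin (i + 1) _ hzmem
      have hexp : ‖u - (s i + (c / ‖d‖ ^ 2) • d)‖ ^ 2 = ‖u - s i‖ ^ 2 - c ^ 2 / ‖d‖ ^ 2 := by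
        have he : u - (s i + (c / ‖d‖ ^ 2) • d) = (u - s i) - (c / ‖d‖ ^ 2) • d := by abel
        rw [he, norm_sub_sq_real, inner_smul_right, ← hcdef, norm_smul,
          Real.norm_eq_abs, mul_pow, sq_abs]
        field_simp
        ring
      have hsq : ‖u - s (i + 1)‖ ^ 2 ≤ ‖u - (s i + (c / ‖d‖ ^ 2) • d)‖ ^ 2 :=
        pow_le_pow_left₀ (norm_nonneg _) hle 2
      rw [hexp] at hsq
      rw [hlm, hPd, mul_comm]
      exact (div_le_iff₀ hdn2).mp (by linarith)
  -- pointwise sup bound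
  have hsupb : ∀ i ∈ Finset.Icc (n + 1) (2 * n),
      (⨆ l : Λ, |(l : StrongDual ℝ H) (u - s i)|)
        ≤ (|lam (i + 1) (u - s i)| / P i (lam (i + 1))) * P i (lam (i + 1)) ^ (1 / β) := by
    intro i hi
    have hp_pos : 0 < P i (lam (i + 1)) :=
      lt_of_le_of_ne (hPnonneg i _) (Ne.symm (hPne i hi))
    have hRHSeq : (|lam (i + 1) (u - s i)| / P i (lam (i + 1))) * P i (lam (i + 1)) ^ (1 / β)
        = |lam (i + 1) (u - s i)| * P i (lam (i + 1)) ^ (1 / β - 1) := by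
      rw [Real.rpow_sub hp_pos, Real.rpow_one]
      field_simp
    rw [hRHSeq]
    apply ciSup_le
    rintro ⟨l, hl⟩
    simp only
    by_cases hPl : P i l = 0
    · have hlmem : (InnerProductSpace.toDual ℝ H).symm l ∈ V i := by
        haveI := hfd i
        have hcl : IsClosed ((V i : Set H)) := (V i).closed_of_finiteDimensional
        have hne : (V i : Set H).Nonempty := ⟨0, (V i).zero_mem⟩
        exact (hcl.mem_iff_infDist_zero hne).mpr (by rw [← hP]; exact hPl)
      have h0 : l (u - s i) = 0 := by
        rw [← InnerProductSpace.toDual_symm_apply, real_inner_comm]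
        exact (hs i).2 _ hlmem
      rw [h0, abs_zero]
      positivity
    · have hPl_pos : 0 < P i l := lt_of_le_of_ne (hPnonneg i l) (Ne.symm hPl)
      have hg := hgreedy i l hl
      have hstep : |l (u - s i)| ^ β ≤ |lam (i + 1) (u - s i)| ^ β
          * P i (lam (i + 1)) ^ (1 - β) := by
        have h1 : |l (u - s i)| ^ β
            = |l (u - s i)| ^ β * P i l ^ (1 - β) * P i l ^ (β - 1) := by
          rw [mul_assoc, ← Real.rpow_add hPl_pos]
          norm_num
        have h2 : P i l ^ (β - 1) ≤ 1 :=
          Real.rpow_le_one hPl_pos.le (hPle1 i l hl) (by linarith)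
        calc |l (u - s i)| ^ β
            = |l (u - s i)| ^ β * P i l ^ (1 - β) * P i l ^ (β - 1) := h1
          _ ≤ (|lam (i + 1) (u - s i)| ^ β * P i (lam (i + 1)) ^ (1 - β)) * 1 := by
              apply mul_le_mul hg h2 (Real.rpow_nonneg hPl_pos.le _)
              positivity
          _ = _ := by rw [mul_one]
      have hmono := Real.rpow_le_rpow (by positivity) hstep (by positivity : (0:ℝ) ≤ β⁻¹)
      have hlhs : (|l (u - s i)| ^ β) ^ β⁻¹ = |l (u - s i)| := by
        rw [← Real.rpow_mul (abs_nonneg _), mul_inv_cancel₀ hβ0.ne', Real.rpow_one]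
      have hrhs : (|lam (i + 1) (u - s i)| ^ β * P i (lam (i + 1)) ^ (1 - β)) ^ β⁻¹
          = |lam (i + 1) (u - s i)| * P i (lam (i + 1)) ^ (1 / β - 1) := by
        rw [Real.mul_rpow (by positivity) (by positivity),
          ← Real.rpow_mul (abs_nonneg _), mul_inv_cancel₀ hβ0.ne', Real.rpow_one,
          ← Real.rpow_mul hp_pos.le]
        congr 1
        field_simp
      rwa [hlhs, hrhs] at hmono
  -- notation for the three products
  set I : Finset ℕ := Finset.Icc (n + 1) (2 * n) with hI
  have hcard : I.card = n := by rw [hI, Nat.card_Icc]; omega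
  set T : ℝ := ∏ i ∈ I, |lam (i + 1) (u - s i)| / P i (lam (i + 1)) with hT
  set Q : ℝ := ∏ i ∈ I, P i (lam (i + 1)) ^ (1 / β) with hQ
  have hT0 : 0 ≤ T := Finset.prod_nonneg fun i hi =>
    div_nonneg (abs_nonneg _) (hPnonneg i _)
  have hQ0 : 0 ≤ Q := Finset.prod_nonneg fun i hi => Real.rpow_nonneg (hPnonneg i _) _
  have hS0 : 0 ≤ ∏ i ∈ I, ⨆ l : Λ, |(l : StrongDual ℝ H) (u - s i)| :=
    Finset.prod_nonneg fun i hi => Real.iSup_nonneg fun l => abs_nonneg _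
  have hprod1 : (∏ i ∈ I, ⨆ l : Λ, |(l : StrongDual ℝ H) (u - s i)|) ≤ T * Q := by
    rw [hT, hQ, ← Finset.prod_mul_distrib]
    exact Finset.prod_le_prod (fun i hi => Real.iSup_nonneg fun l => abs_nonneg _) hsupb
  -- the product estimate for T
  set B : ℝ := (n : ℝ) ^ (-(1 : ℝ) / 2) * ‖u - s (n + 1)‖ with hB
  have hB0 : 0 ≤ B := by positivity
  have hBsq : B ^ 2 = ‖u - s (n + 1)‖ ^ 2 / n := by
    rw [hB, mul_pow, ← Real.rpow_natCast ((n : ℝ) ^ (-(1 : ℝ) / 2)) 2,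
      ← Real.rpow_mul (Nat.cast_nonneg n)]
    norm_num
    rw [Real.rpow_neg_one]
    ring
  have hTB : T ≤ B ^ n := by
    have hT2 : T ^ 2 ≤ ∏ i ∈ I, (‖u - s i‖ ^ 2 - ‖u - s (i + 1)‖ ^ 2) := by
      rw [hT, ← Finset.prod_pow]
      refine Finset.prod_le_prod (fun i hi => by positivity) fun i hi => ?_
      have hp_pos : 0 < P i (lam (i + 1)) :=
        lt_of_le_of_ne (hPnonneg i _) (Ne.symm (hPne i hi))
      rw [div_pow, sq_abs, div_le_iff₀ (by positivity), mul_comm]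
      exact hkey i
    have hsum : ∑ i ∈ I, (‖u - s i‖ ^ 2 - ‖u - s (i + 1)‖ ^ 2)
        = ‖u - s (n + 1)‖ ^ 2 - ‖u - s (2 * n + 1)‖ ^ 2 := by
      have h := sum_Icc_telescope' (fun i => ‖u - s i‖ ^ 2) (n + 1) (n - 1)
      rw [show (n + 1) + (n - 1) = 2 * n by omega] at h
      exact h
    have hsumle : ∑ i ∈ I, (‖u - s i‖ ^ 2 - ‖u - s (i + 1)‖ ^ 2)
        ≤ ‖u - s (n + 1)‖ ^ 2 := by
      rw [hsum]; nlinarith [norm_nonneg (u - s (2 * n + 1))]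
    have hAMGM : ∏ i ∈ I, (‖u - s i‖ ^ 2 - ‖u - s (i + 1)‖ ^ 2)
        ≤ (‖u - s (n + 1)‖ ^ 2 / n) ^ n := by
      have hGM := Real.geom_mean_le_arith_mean_weighted I (fun _ => (n : ℝ)⁻¹)
        (fun i => ‖u - s i‖ ^ 2 - ‖u - s (i + 1)‖ ^ 2)
        (fun i _ => by positivity)
        (by rw [Finset.sum_const, hcard, nsmul_eq_mul, mul_inv_cancel₀ hn0])
        (fun i _ => hc0 i)
      have hGM2 : ∏ i ∈ I, (‖u - s i‖ ^ 2 - ‖u - s (i + 1)‖ ^ 2) ^ ((n : ℝ)⁻¹)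
          ≤ ‖u - s (n + 1)‖ ^ 2 / n := by
        refine hGM.trans ?_
        rw [← Finset.mul_sum]
        rw [div_eq_inv_mul]
        exact mul_le_mul_of_nonneg_left hsumle (by positivity)
      have heq : ∏ i ∈ I, (‖u - s i‖ ^ 2 - ‖u - s (i + 1)‖ ^ 2)
          = (∏ i ∈ I, (‖u - s i‖ ^ 2 - ‖u - s (i + 1)‖ ^ 2) ^ ((n : ℝ)⁻¹)) ^ n := by
        rw [← Finset.prod_pow]
        refine Finset.prod_congr rfl fun i hi => ?_
        rw [← Real.rpow_natCast ((‖u - s i‖ ^ 2 - ‖u - s (i + 1)‖ ^ 2) ^ ((n : ℝ)⁻¹)) n,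
          ← Real.rpow_mul (hc0 i), inv_mul_cancel₀ hn0, Real.rpow_one]
      rw [heq]
      exact pow_le_pow_left₀ (Finset.prod_nonneg fun i hi => Real.rpow_nonneg (hc0 i) _)
        hGM2 n
    have hfinal : T ^ 2 ≤ (B ^ n) ^ 2 := by
      have : (B ^ n) ^ 2 = (B ^ 2) ^ n := by ring
      rw [this, hBsq]
      exact hT2.trans hAMGM
    exact (pow_le_pow_iff_left₀ hT0 (by positivity) two_ne_zero).mp hfinal
  -- assemble
  have hmain : (∏ i ∈ I, ⨆ l : Λ, |(l : StrongDual ℝ H) (u - s i)|) ^ ((n : ℝ)⁻¹)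
      ≤ (T * Q) ^ ((n : ℝ)⁻¹) :=
    Real.rpow_le_rpow hS0 hprod1 (by positivity)
  refine hmain.trans ?_
  rw [Real.mul_rpow hT0 hQ0]
  have hTn : T ^ ((n : ℝ)⁻¹) ≤ B := by
    have h1 : T ^ ((n : ℝ)⁻¹) ≤ (B ^ n) ^ ((n : ℝ)⁻¹) :=
      Real.rpow_le_rpow hT0 hTB (by positivity)
    have h2 : (B ^ n) ^ ((n : ℝ)⁻¹) = B := by
      rw [← Real.rpow_natCast B n, ← Real.rpow_mul hB0, mul_inv_cancel₀ hn0, Real.rpow_one]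
    rwa [h2] at h1
  calc T ^ ((n : ℝ)⁻¹) * Q ^ ((n : ℝ)⁻¹)
      ≤ B * Q ^ ((n : ℝ)⁻¹) :=
        mul_le_mul_of_nonneg_right hTn (Real.rpow_nonneg hQ0 _)
    _ = (n : ℝ) ^ (-(1 : ℝ) / 2) * ‖u - s (n + 1)‖ * Q ^ ((n : ℝ)⁻¹) := by rw [hB]
end

section
/- Let $\mathcal{H}$ be a Hilbert space, $\mathcal{F} \subset \mathcal{H}$ compact with $\|f\| \leq 1$ for all $f \in \mathcal{F}$, and $(f_n)_{n\geq 0} \subset \mathcal{F}$ any sequence with $V_n = \mathrm{span}\{f_0,\dots,f_{n-1}\}$ and $\nu_n = \mathrm{dist}(f_n, V_n)$. Suppose $d_n(\mathcal{F}) \leq C_0 e^{-c_0 n^\alpha}$ for all $n \geq 1$ with $C_0, c_0, \alpha > 0$. Then for all $n \geq 2$: $\left( \prod_{i=n+1}^{2n} \nu_i \right)^{1/n} \leq \sqrt{2 \max\{1, C_0\}} \cdot e^{-c_1 n^\alpha}$ with $c_1 = 2^{-(2+\alpha)} c_0$. -/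
set_option maxHeartbeats 1000000

open Finset Submodule

noncomputable section

namespace GreedyWSH

variable {H : Type*} [NormedAddCommGroup H] [InnerProductSpace ℝ H]

local notation "⟪" x ", " y "⟫" => @inner ℝ _ _ x y

def gram {k : ℕ} (v : Fin k → H) : Matrix (Fin k) (Fin k) ℝ :=
  Matrix.of fun i j => ⟪v i, v j⟫

lemma gram_apply {k : ℕ} (v : Fin k → H) (i j : Fin k) : gram v i j = ⟪v i, v j⟫ := rfl

lemma infDist_eq_norm_sub_proj (W : Submodule ℝ H) [HasOrthogonalProjection W] (x : H) :
    Metric.infDist x (W : Set H) = ‖x - (orthogonalProjection W x : H)‖ := by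
  rw [Metric.infDist_eq_iInf, show ‖x - (orthogonalProjection W x : H)‖ = ⨅ y : W, ‖x - y‖ from Submodule.starProjection_minimal x]
  exact iInf_congr fun y => dist_eq_norm _ _

lemma det_gram {k : ℕ} (v : Fin k → H) :
    (gram v).det = ∏ i, Metric.infDist (v i) (span ℝ (v '' Set.Iio i) : Set H) ^ 2 := by
  induction k with
  | zero => simp [gram]
  | succ k ih =>
    set w : Fin k → H := v ∘ Fin.castSucc with hw
    set x := v (Fin.last k) with hx
    set W : Submodule ℝ H := span ℝ (Set.range w) with hWdef
    haveI : FiniteDimensional ℝ W := FiniteDimensional.span_of_finite ℝ (Set.finite_range w)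
    set p : H := (orthogonalProjection W x : H) with hp
    set q : H := x - p with hq
    have hpW : p ∈ W := (orthogonalProjection W x).2
    have hqW : q ∈ Wᗮ := Submodule.sub_starProjection_mem_orthogonal (K := W) x
    have hq_inner : ∀ y ∈ W, ⟪y, q⟫ = 0 := fun y hy => (Submodule.mem_orthogonal W q).mp hqW y hy
    have hx_eq : x = p + q := by rw [hq]; abel
    -- determinant key step
    have key : (gram v).det = ‖q‖ ^ 2 * (gram w).det := by
      have hsplit : (fun i => gram v i (Fin.last k))
          = (fun i => ⟪v i, p⟫) + fun i => ⟪v i, q⟫ := by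
        funext i
        simp only [gram_apply, Pi.add_apply, ← inner_add_right, ← hx_eq, ← hx]
      have h1 : (gram v).det
          = ((gram v).updateCol (Fin.last k) fun i => ⟪v i, p⟫).det
            + ((gram v).updateCol (Fin.last k) fun i => ⟪v i, q⟫).det := by
        rw [← Matrix.det_updateCol_add, ← hsplit, Matrix.updateCol_eq_self]
      have hdet1 : ((gram v).updateCol (Fin.last k) fun i => ⟪v i, p⟫).det = 0 := by
        obtain ⟨c, hc⟩ := (Submodule.mem_span_range_iff_exists_fun ℝ).mp (hWdef ▸ hpW)
        have hfun : (fun i => ⟪v i, p⟫)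
            = ∑ j : Fin k, c j • fun i => gram v i (Fin.castSucc j) := by
          funext i
          rw [← hc]
          simp only [inner_sum, real_inner_smul_right, Finset.sum_apply, Pi.smul_apply,
            smul_eq_mul, gram_apply]
          rfl
        let L : (Fin (k + 1) → ℝ) →ₗ[ℝ] ℝ :=
          { toFun := fun u => ((gram v).updateCol (Fin.last k) u).det
            map_add' := fun a b => Matrix.det_updateCol_add _ _ a b
            map_smul' := fun r a => Matrix.det_updateCol_smul _ _ r a }
        have hL : ((gram v).updateCol (Fin.last k) fun i => ⟪v i, p⟫).det
            = L (∑ j : Fin k, c j • fun i => gram v i (Fin.castSucc j)) := by rw [← hfun]; rfl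
        rw [hL, map_sum]
        refine Finset.sum_eq_zero fun j _ => ?_
        rw [map_smul]
        have : L (fun i => gram v i (Fin.castSucc j)) = 0 := by
          show ((gram v).updateCol (Fin.last k) fun i => gram v i (Fin.castSucc j)).det = 0
          refine Matrix.det_zero_of_column_eq (Fin.castSucc_lt_last j).ne ?_
          intro a
          rw [Matrix.updateCol_self,
            Matrix.updateCol_ne (Fin.castSucc_lt_last j).ne]
        rw [this, smul_eq_mul, mul_zero]
      have hcolq : (fun i => ⟪v i, q⟫) = Pi.single (Fin.last k) (‖q‖ ^ 2) := by
        funext i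
        induction i using Fin.lastCases with
        | last =>
          rw [Pi.single_eq_same, ← hx, hx_eq, inner_add_left,
            hq_inner p hpW, real_inner_self_eq_norm_sq, zero_add]
        | cast j =>
          rw [Pi.single_eq_of_ne (Fin.castSucc_lt_last j).ne]
          exact hq_inner _ (subset_span ⟨j, rfl⟩)
      have hdet2 : ((gram v).updateCol (Fin.last k) fun i => ⟪v i, q⟫).det
          = ‖q‖ ^ 2 * (gram w).det := by
        rw [hcolq, Matrix.det_succ_column _ (Fin.last k)]
        rw [Finset.sum_eq_single (Fin.last k)]
        · have hsub : ((gram v).updateCol (Fin.last k)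
              (Pi.single (Fin.last k) (‖q‖ ^ 2))).submatrix
                (Fin.last k).succAbove (Fin.last k).succAbove = gram w := by
            ext a b
            rw [Fin.succAbove_last, Matrix.submatrix_apply,
              Matrix.updateCol_ne (Fin.castSucc_lt_last b).ne]
            rfl
          rw [hsub, Matrix.updateCol_self, Pi.single_eq_same]
          have : ((-1 : ℝ)) ^ ((Fin.last k : ℕ) + (Fin.last k : ℕ)) = 1 :=
            Even.neg_one_pow ⟨k, by simp [Fin.val_last]⟩
          rw [this, one_mul]
        · intro i _ hi
          rw [Matrix.updateCol_self, Pi.single_eq_of_ne hi, mul_zero, zero_mul]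
        · intro h; exact absurd (Finset.mem_univ _) h
      rw [h1, hdet1, hdet2, zero_add]
    -- index set images
    have hIio : ∀ j : Fin k, v '' Set.Iio (Fin.castSucc j) = w '' Set.Iio j := by
      intro j
      have : Set.Iio (Fin.castSucc j) = Fin.castSucc '' Set.Iio j := by
        ext i
        simp only [Set.mem_Iio, Set.mem_image]
        refine ⟨fun hi => ⟨⟨i.val, lt_trans hi j.isLt⟩, hi, Fin.ext rfl⟩, ?_⟩
        rintro ⟨a, ha, rfl⟩
        exact ha
      rw [this, ← Set.image_comp]
    have hlastimg : v '' Set.Iio (Fin.last k) = Set.range w := by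
      have : Set.Iio (Fin.last k) = Set.range (Fin.castSucc (n := k)) := by
        ext i
        simp only [Set.mem_Iio, Set.mem_range]
        refine ⟨fun hi => ⟨⟨i.val, hi⟩, Fin.ext rfl⟩, ?_⟩
        rintro ⟨a, rfl⟩
        exact Fin.castSucc_lt_last a
      rw [this, ← Set.range_comp]
    rw [key, ih, Fin.prod_univ_castSucc]
    have hlast : Metric.infDist (v (Fin.last k))
        (span ℝ (v '' Set.Iio (Fin.last k)) : Set H) ^ 2 = ‖q‖ ^ 2 := by
      rw [hlastimg, ← hWdef, ← hx, infDist_eq_norm_sub_proj, ← hp, ← hq]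
    rw [hlast]
    have : ∀ j : Fin k, Metric.infDist (v (Fin.castSucc j))
        (span ℝ (v '' Set.Iio (Fin.castSucc j)) : Set H) ^ 2
        = Metric.infDist (w j) (span ℝ (w '' Set.Iio j) : Set H) ^ 2 := by
      intro j; rw [hIio j]; rfl
    rw [Finset.prod_congr rfl fun j _ => this j]
    ring


lemma gram_quadform {k : ℕ} (v : Fin k → H) (x : Fin k → ℝ) :
    dotProduct x ((gram v).mulVec x) = ‖∑ i, x i • v i‖ ^ 2 := by
  rw [← real_inner_self_eq_norm_sq, sum_inner]
  simp only [real_inner_smul_left, inner_sum, real_inner_smul_right]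
  simp only [dotProduct, Matrix.mulVec, gram_apply]
  refine Finset.sum_congr rfl fun i _ => ?_
  rw [Finset.mul_sum]
  exact Finset.sum_congr rfl fun j _ => by ring

lemma gram_isHermitian {k : ℕ} (v : Fin k → H) : (gram v).IsHermitian := by
  ext i j
  simp [Matrix.conjTranspose_apply, gram_apply, real_inner_comm]

lemma gram_posSemidef {k : ℕ} (v : Fin k → H) : (gram v).PosSemidef := by
  refine Matrix.PosSemidef.of_dotProduct_mulVec_nonneg (gram_isHermitian v) fun x => ?_
  rw [star_trivial, gram_quadform]
  positivity

lemma trace_eq_sum_eigenvalues {k : ℕ} {M : Matrix (Fin k) (Fin k) ℝ} (hM : M.IsHermitian) :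
    M.trace = ∑ i, hM.eigenvalues i := by
  simpa using hM.trace_eq_sum_eigenvalues

lemma quadform_eq_sum {k : ℕ} {M : Matrix (Fin k) (Fin k) ℝ} (hM : M.IsHermitian)
    (x : EuclideanSpace ℝ (Fin k)) :
    dotProduct ⇑x (M.mulVec ⇑x)
      = ∑ i, hM.eigenvalues i * (inner ℝ (hM.eigenvectorBasis i) x : ℝ) ^ 2 := by
  set b := hM.eigenvectorBasis with hb
  have hTb : ∀ i, Matrix.toEuclideanLin M (b i) = hM.eigenvalues i • b i := fun i => by
    ext j; simpa [Matrix.toEuclideanLin_apply] using congrFun (hM.mulVec_eigenvectorBasis i) j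
  have hTx : Matrix.toEuclideanLin M x
      = ∑ i, ((inner ℝ (b i) x : ℝ) * hM.eigenvalues i) • b i := by
    conv_lhs => rw [← b.sum_repr' x]
    rw [map_sum]
    refine Finset.sum_congr rfl fun i _ => ?_
    rw [map_smul, hTb, smul_smul]
  have hstep : dotProduct ⇑x (M.mulVec ⇑x)
      = (inner ℝ x (Matrix.toEuclideanLin M x) : ℝ) := by
    simp [PiLp.inner_apply, RCLike.inner_apply, dotProduct]
    exact Finset.sum_congr rfl fun i _ => mul_comm _ _
  rw [hstep, hTx, inner_sum]
  simp only [real_inner_smul_right]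
  refine Finset.sum_congr rfl fun i _ => ?_
  rw [real_inner_comm x (b i)]
  ring

lemma card_filter_le_val {K r : ℕ} (hr : r ≤ K) :
    (Finset.univ.filter (fun i : Fin K => K - r ≤ (i : ℕ))).card = r := by
  have : (Finset.univ.filter (fun i : Fin K => K - r ≤ (i : ℕ)))
      = Finset.map ⟨fun j : Fin r => (⟨K - r + j.val, by omega⟩ : Fin K),
          fun a b hab => by
            simpa [Fin.ext_iff] using hab⟩ Finset.univ := by
    ext i
    simp only [Finset.mem_filter, Finset.mem_univ, true_and, Finset.mem_map,
      Function.Embedding.coeFn_mk]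
    constructor
    · intro hi
      exact ⟨⟨i.val - (K - r), by omega⟩, Fin.ext (by show K - r + (i.val - (K - r)) = i.val; omega)⟩
    · rintro ⟨a, rfl⟩
      show K - r ≤ K - r + a.val; omega
  rw [this, Finset.card_map, Finset.card_univ, Fintype.card_fin]

lemma knapsack {K r : ℕ} (hr : r ≤ K) (μ t : Fin K → ℝ) (hmono : Monotone μ)
    (ht0 : ∀ i, 0 ≤ t i) (ht1 : ∀ i, t i ≤ 1) (hsum : ∑ i, t i = r) :
    ∑ i, μ i * t i ≤ ∑ i ∈ Finset.univ.filter (fun i : Fin K => K - r ≤ (i : ℕ)), μ i := by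
  rcases Nat.eq_zero_or_pos r with h0 | hrpos
  · subst h0
    have ht : ∀ i ∈ Finset.univ, t i = 0 :=
      (Finset.sum_eq_zero_iff_of_nonneg (fun i _ => ht0 i)).mp (by simpa using hsum)
    have hfilter : (Finset.univ.filter (fun i : Fin K => K - 0 ≤ (i : ℕ))) = ∅ :=
      Finset.filter_false_of_mem fun i _ => by
        simpa using i.isLt
    rw [hfilter, Finset.sum_empty]
    exact le_of_eq (Finset.sum_eq_zero fun i hi => by rw [ht i hi, mul_zero])
  · have hK : 0 < K := lt_of_lt_of_le hrpos hr
    set p : Fin K := ⟨K - r, by omega⟩ with hp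
    set hiS := Finset.univ.filter (fun i : Fin K => K - r ≤ (i : ℕ)) with hhiS
    set loS := Finset.univ.filter (fun i : Fin K => ¬ (K - r ≤ (i : ℕ))) with hloS
    have hcard : hiS.card = r := card_filter_le_val hr
    have hsplit : ∀ f : Fin K → ℝ, ∑ i, f i = ∑ i ∈ hiS, f i + ∑ i ∈ loS, f i := fun f =>
      (Finset.sum_filter_add_sum_filter_not Finset.univ (fun i : Fin K => K - r ≤ (i : ℕ)) f).symm
    have hsum_lo : ∑ i ∈ loS, t i = (r : ℝ) - ∑ i ∈ hiS, t i := by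
      have h := hsplit t
      rw [hsum] at h
      linarith
    have hle_p : ∀ i ∈ loS, μ i ≤ μ p := by
      intro i hi
      rw [hloS, Finset.mem_filter] at hi
      refine hmono (show i ≤ p from ?_)
      rw [Fin.le_def]
      simp only [hp]
      omega
    have hp_le : ∀ i ∈ hiS, μ p ≤ μ i := by
      intro i hi
      rw [hhiS, Finset.mem_filter] at hi
      refine hmono (show p ≤ i from ?_)
      rw [Fin.le_def]
      simp only [hp]
      omega
    calc ∑ i, μ i * t i
        = ∑ i ∈ hiS, μ i * t i + ∑ i ∈ loS, μ i * t i := hsplit _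
      _ ≤ ∑ i ∈ hiS, μ i * t i + ∑ i ∈ loS, μ p * t i := by
          refine add_le_add_right (Finset.sum_le_sum fun i hi => ?_) _
          exact mul_le_mul_of_nonneg_right (hle_p i hi) (ht0 i)
      _ = ∑ i ∈ hiS, μ i * t i + μ p * ((r:ℝ) - ∑ i ∈ hiS, t i) := by
          rw [← Finset.mul_sum, hsum_lo]
      _ = ∑ i ∈ hiS, (μ i * t i + μ p * (1 - t i)) := by
          rw [Finset.sum_add_distrib, ← Finset.mul_sum, Finset.sum_sub_distrib,
            Finset.sum_const, hcard]
          simp [nsmul_eq_mul]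
      _ ≤ ∑ i ∈ hiS, (μ i * t i + μ i * (1 - t i)) := by
          refine Finset.sum_le_sum fun i hi => add_le_add_right ?_ _
          exact mul_le_mul_of_nonneg_right (hp_le i hi) (by linarith [ht1 i])
      _ = ∑ i ∈ hiS, μ i := Finset.sum_congr rfl fun i _ => by ring

lemma dot_self_eu {K : ℕ} (u : EuclideanSpace ℝ (Fin K)) :
    dotProduct ⇑u ⇑u = ‖u‖ ^ 2 := by
  rw [← real_inner_self_eq_norm_sq]
  simp [PiLp.inner_apply, RCLike.inner_apply, dotProduct]
  rw [EuclideanSpace.norm_sq_eq]; simp [sq]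

lemma parseval_sq {K : ℕ} {E : Type*} [NormedAddCommGroup E] [InnerProductSpace ℝ E]
    (b : OrthonormalBasis (Fin K) ℝ E) (y : E) :
    ∑ i, (inner ℝ (b i) y : ℝ) ^ 2 = ‖y‖ ^ 2 := by
  have h := b.sum_inner_mul_inner y y
  rw [real_inner_self_eq_norm_sq] at h
  rw [← h]
  refine Finset.sum_congr rfl fun i _ => ?_
  rw [real_inner_comm y (b i)]
  ring

lemma prod_le_pow_of_sum_le {ι : Type*} (s : Finset ι) (x : ι → ℝ) (hx : ∀ i ∈ s, 0 ≤ x i)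
    (N : ℕ) (hN : s.card = N) (hNpos : 0 < N) (T : ℝ) (hT : ∑ i ∈ s, x i ≤ T) :
    ∏ i ∈ s, x i ≤ (T / N) ^ N := by
  have hw : ∀ i ∈ s, (0:ℝ) ≤ ((N:ℝ)⁻¹) := fun _ _ => by positivity
  have hwsum : ∑ _i ∈ s, ((N:ℝ)⁻¹) = 1 := by
    rw [Finset.sum_const, hN, nsmul_eq_mul]
    field_simp
  have key := Real.geom_mean_le_arith_mean_weighted s (fun _ => (N:ℝ)⁻¹) x hw hwsum hx
  have h2 : ∑ i ∈ s, (N:ℝ)⁻¹ * x i ≤ T / N := by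
    rw [← Finset.mul_sum, div_eq_inv_mul]
    exact mul_le_mul_of_nonneg_left hT (by positivity)
  have h3 : (∏ i ∈ s, x i ^ ((N:ℝ)⁻¹)) ^ N = ∏ i ∈ s, x i := by
    rw [← Finset.prod_pow]
    refine Finset.prod_congr rfl fun i hi => ?_
    rw [← Real.rpow_natCast (x i ^ ((N:ℝ)⁻¹)) N, ← Real.rpow_mul (hx i hi),
      inv_mul_cancel₀ (by positivity), Real.rpow_one]
  calc ∏ i ∈ s, x i = (∏ i ∈ s, x i ^ ((N:ℝ)⁻¹)) ^ N := h3.symm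
    _ ≤ (T / N) ^ N := by
        refine pow_le_pow_left₀ ?_ (le_trans key h2) N
        exact Finset.prod_nonneg fun i hi => Real.rpow_nonneg (hx i hi) _

lemma entropy_bound {K r : ℕ} (hr1 : 0 < r) (hrK : r < K) :
    ((K:ℝ)/(r:ℝ)) ^ r * ((K:ℝ)/((K - r : ℕ):ℝ)) ^ (K - r) ≤ 2 ^ K := by
  have hK0 : 0 < K := lt_of_le_of_lt (Nat.zero_le r) hrK
  have hKpos : (0:ℝ) < K := by exact_mod_cast hK0
  have hrpos : (0:ℝ) < r := by exact_mod_cast hr1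
  have hkrn : 0 < K - r := by omega
  have hkr : (0:ℝ) < ((K - r : ℕ):ℝ) := by exact_mod_cast hkrn
  set a : ℝ := (r:ℝ) with ha
  set d : ℝ := ((K - r : ℕ):ℝ) with hd
  have had : a + d = K := by
    rw [ha, hd]
    push_cast [Nat.cast_sub hrK.le]
    ring
  have l1 : a * Real.log ((K:ℝ)/a) ≤ a * Real.log 2 + ((K:ℝ)/2 - a) := by
    have hlog : Real.log ((K:ℝ)/a) = Real.log 2 + Real.log ((K:ℝ)/(2*a)) := by
      rw [← Real.log_mul (by norm_num) (by positivity)]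
      congr 1
      field_simp
    have h2 : Real.log ((K:ℝ)/(2*a)) ≤ (K:ℝ)/(2*a) - 1 :=
      Real.log_le_sub_one_of_pos (by positivity)
    have h3 : a * ((K:ℝ)/(2*a) - 1) = (K:ℝ)/2 - a := by
      field_simp
    nlinarith [mul_le_mul_of_nonneg_left h2 hrpos.le]
  have l2 : d * Real.log ((K:ℝ)/d) ≤ d * Real.log 2 + ((K:ℝ)/2 - d) := by
    have hlog : Real.log ((K:ℝ)/d) = Real.log 2 + Real.log ((K:ℝ)/(2*d)) := by
      rw [← Real.log_mul (by norm_num) (by positivity)]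
      congr 1
      field_simp
    have h2 : Real.log ((K:ℝ)/(2*d)) ≤ (K:ℝ)/(2*d) - 1 :=
      Real.log_le_sub_one_of_pos (by positivity)
    have h3 : d * ((K:ℝ)/(2*d) - 1) = (K:ℝ)/2 - d := by
      field_simp
    nlinarith [mul_le_mul_of_nonneg_left h2 hkr.le]
  have main : a * Real.log ((K:ℝ)/a) + d * Real.log ((K:ℝ)/d) ≤ (K:ℝ) * Real.log 2 := by
    have he : a * Real.log 2 + d * Real.log 2 = (K:ℝ) * Real.log 2 := by
      rw [← add_mul, had]
    nlinarith [l1, l2]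
  have hX : (0:ℝ) < ((K:ℝ)/a) ^ r * ((K:ℝ)/d) ^ (K - r) := by positivity
  refine (Real.log_le_log_iff hX (by positivity)).mp ?_
  rw [Real.log_mul (by positivity) (by positivity), Real.log_pow, Real.log_pow, Real.log_pow]
  calc (r:ℝ) * Real.log ((K:ℝ)/a) + ((K - r : ℕ):ℝ) * Real.log ((K:ℝ)/d)
      = a * Real.log ((K:ℝ)/a) + d * Real.log ((K:ℝ)/d) := by rw [← ha, ← hd]
    _ ≤ (K:ℝ) * Real.log 2 := main

lemma det_add_le_of_rank_le {K m : ℕ} (hmK : m < K)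
    (B C : Matrix (Fin K) (Fin K) ℝ) (hB : B.PosSemidef) (hC : C.PosSemidef)
    (hrange : Module.finrank ℝ ↥(LinearMap.range B.mulVecLin) ≤ m)
    (htrA : (B + C).trace ≤ (K:ℝ)) (δ : ℝ) (hδ0 : 0 ≤ δ) (hδ1 : δ ≤ 1)
    (htrC : C.trace ≤ (K:ℝ) * δ ^ 2) :
    (B + C).det ≤ 2 ^ K * δ ^ (2 * (K - m)) := by
  classical
  have hA : (B + C).PosSemidef := hB.add hC
  set lam : Fin K → ℝ := hA.1.eigenvalues with hlam
  have hlam0 : ∀ i, 0 ≤ lam i := hA.eigenvalues_nonneg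
  have htrAeq : (B + C).trace = ∑ i, lam i := trace_eq_sum_eigenvalues hA.1
  set muB : Fin K → ℝ := hB.1.eigenvalues with hmuB
  have htrBeq : B.trace = ∑ s, muB s := trace_eq_sum_eigenvalues hB.1
  have hCquad : ∀ y : Fin K → ℝ, 0 ≤ dotProduct y (C.mulVec y) := by
    intro y
    have h := hC.dotProduct_mulVec_nonneg y
    rwa [star_trivial] at h
  have htrC0 : 0 ≤ C.trace := by
    refine Finset.sum_nonneg fun i _ => ?_
    have h := hCquad (Pi.single i 1)
    simpa [single_dotProduct, Matrix.mulVec_single] using h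
  set S : Finset (Fin K) := Finset.univ.filter (fun s => muB s ≠ 0) with hS
  set r : ℕ := S.card with hrdef
  have hrK : r ≤ K := by
    calc r ≤ (Finset.univ : Finset (Fin K)).card :=
          Finset.card_le_card (Finset.subset_univ S)
      _ = K := by simp
  set uB := hB.1.eigenvectorBasis with huB
  have hrm : r ≤ m := by
    have hFmem : ∀ s : {s // s ∈ S}, ⇑(uB s.1) ∈ LinearMap.range B.mulVecLin := by
      rintro ⟨s, hs⟩
      refine ⟨(muB s)⁻¹ • ⇑(uB s), ?_⟩
      have hne : muB s ≠ 0 := by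
        rw [hS] at hs
        exact (Finset.mem_filter.mp hs).2
      rw [Matrix.mulVecLin_apply, Matrix.mulVec_smul, hB.1.mulVec_eigenvectorBasis,
        smul_smul, inv_mul_cancel₀ hne, one_smul]
    have hon : Orthonormal ℝ (fun s : {s // s ∈ S} => uB s.1) :=
      uB.orthonormal.comp Subtype.val Subtype.val_injective
    have hli : LinearIndependent ℝ (fun s : {s // s ∈ S} => uB s.1) := hon.linearIndependent
    have hli2 : LinearIndependent ℝ
        (fun s : {s // s ∈ S} => (⇑(uB s.1) : Fin K → ℝ)) :=
      hli.map' (WithLp.linearEquiv 2 ℝ (Fin K → ℝ)).toLinearMap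
        (LinearMap.ker_eq_bot_of_injective (WithLp.linearEquiv 2 ℝ (Fin K → ℝ)).injective)
    have hli3 : LinearIndependent ℝ
        (fun s : {s // s ∈ S} =>
          (⟨⇑(uB s.1), hFmem s⟩ : ↥(LinearMap.range B.mulVecLin))) := by
      apply LinearIndependent.of_comp (LinearMap.range B.mulVecLin).subtype
      exact hli2
    have hcard := hli3.fintype_card_le_finrank
    rw [Fintype.card_coe] at hcard
    exact le_trans hcard hrange
  set vA := hA.1.eigenvectorBasis with hvA
  set t : Fin K → ℝ := fun i => ∑ s ∈ S, (inner ℝ (vA i) (uB s) : ℝ) ^ 2 with ht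
  have ht0 : ∀ i, 0 ≤ t i := fun i => Finset.sum_nonneg fun s _ => sq_nonneg _
  have ht1 : ∀ i, t i ≤ 1 := by
    intro i
    have hsub : ∑ s ∈ S, (inner ℝ (vA i) (uB s) : ℝ) ^ 2
        ≤ ∑ s, (inner ℝ (vA i) (uB s) : ℝ) ^ 2 :=
      Finset.sum_le_sum_of_subset_of_nonneg (Finset.subset_univ S)
        (fun s _ _ => sq_nonneg _)
    have hpar : ∑ s, (inner ℝ (vA i) (uB s) : ℝ) ^ 2 = 1 := by
      have h := parseval_sq uB (vA i)
      rw [vA.orthonormal.1 i] at h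
      rw [one_pow] at h
      rw [← h]
      refine Finset.sum_congr rfl fun s _ => ?_
      rw [real_inner_comm (vA i) (uB s)]
    rw [hpar] at hsub
    exact hsub
  have htsum : ∑ i, t i = (r:ℝ) := by
    rw [ht]
    rw [Finset.sum_comm]
    have hone : ∀ s ∈ S, ∑ i, (inner ℝ (vA i) (uB s) : ℝ) ^ 2 = 1 := by
      intro s _
      rw [parseval_sq vA (uB s), uB.orthonormal.1 s]
      norm_num
    rw [Finset.sum_congr rfl hone, Finset.sum_const, nsmul_eq_mul, mul_one]
  have hquadB : ∀ s, dotProduct ⇑(uB s) (B.mulVec ⇑(uB s)) = muB s := by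
    intro s
    rw [hB.1.mulVec_eigenvectorBasis, dotProduct_smul, smul_eq_mul, dot_self_eu,
      uB.orthonormal.1 s]
    norm_num
    rfl
  have hkyfan : B.trace ≤ ∑ i, lam i * t i := by
    have hstep1 : ∀ s, dotProduct ⇑(uB s) ((B + C).mulVec ⇑(uB s))
        = ∑ i, lam i * (inner ℝ (vA i) (uB s) : ℝ) ^ 2 := fun s => quadform_eq_sum hA.1 (uB s)
    have hstep2 : ∀ s, muB s ≤ dotProduct ⇑(uB s) ((B + C).mulVec ⇑(uB s)) := by
      intro s
      rw [Matrix.add_mulVec, dotProduct_add, hquadB s]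
      have h := hCquad ⇑(uB s)
      linarith
    have hchain : B.trace ≤ ∑ s ∈ S, dotProduct ⇑(uB s) ((B + C).mulVec ⇑(uB s)) := by
      have hBsum : B.trace = ∑ s ∈ S, muB s := by
        rw [htrBeq,
          ← Finset.sum_filter_add_sum_filter_not Finset.univ (fun s => muB s ≠ 0) muB]
        have hz : ∑ s ∈ Finset.univ.filter (fun s => ¬ muB s ≠ 0), muB s = 0 := by
          refine Finset.sum_eq_zero fun s hs => ?_
          have hmem := (Finset.mem_filter.mp hs).2
          simpa using hmem
        rw [hz, add_zero]
      rw [hBsum]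
      exact Finset.sum_le_sum fun s _ => hstep2 s
    calc B.trace ≤ ∑ s ∈ S, dotProduct ⇑(uB s) ((B + C).mulVec ⇑(uB s)) := hchain
      _ = ∑ s ∈ S, ∑ i, lam i * (inner ℝ (vA i) (uB s) : ℝ) ^ 2 :=
          Finset.sum_congr rfl fun s _ => hstep1 s
      _ = ∑ i, lam i * t i := by
          rw [Finset.sum_comm]
          refine Finset.sum_congr rfl fun i _ => ?_
          rw [Finset.mul_sum]
  set σ := Tuple.sort lam with hσ
  set mu : Fin K → ℝ := lam ∘ σ with hmu
  have hmono : Monotone mu := Tuple.monotone_sort lam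
  have hmu0 : ∀ i, 0 ≤ mu i := fun i => hlam0 _
  have hmusum : ∑ i, mu i = ∑ i, lam i := Equiv.sum_comp σ lam
  have hmuprod : ∏ i, mu i = ∏ i, lam i := Equiv.prod_comp σ lam
  set t' : Fin K → ℝ := t ∘ σ with ht'
  have hknap := knapsack hrK mu t' hmono (fun i => ht0 _) (fun i => ht1 _)
    (by rw [show ∑ i, t' i = ∑ i, t i from Equiv.sum_comp σ t]; exact htsum)
  have hlamt : ∑ i, mu i * t' i = ∑ i, lam i * t i :=
    Equiv.sum_comp σ (fun i => lam i * t i)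
  set hiS := Finset.univ.filter (fun i : Fin K => K - r ≤ (i : ℕ)) with hhiS
  set loS := Finset.univ.filter (fun i : Fin K => ¬ (K - r ≤ (i : ℕ))) with hloS
  have htop : B.trace ≤ ∑ i ∈ hiS, mu i := by
    calc B.trace ≤ ∑ i, lam i * t i := hkyfan
      _ = ∑ i, mu i * t' i := hlamt.symm
      _ ≤ ∑ i ∈ hiS, mu i := hknap
  have hsplitsum : ∑ i ∈ hiS, mu i + ∑ i ∈ loS, mu i = ∑ i, mu i :=
    Finset.sum_filter_add_sum_filter_not Finset.univ _ mu
  have htrsplit : (B + C).trace = B.trace + C.trace := Matrix.trace_add B C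
  have hmueq : ∑ i, mu i = (B + C).trace := by rw [hmusum, htrAeq]
  have hbot : ∑ i ∈ loS, mu i ≤ C.trace := by linarith
  have hcardhi : hiS.card = r := card_filter_le_val hrK
  have hcardlo : loS.card = K - r := by
    have h2 := Finset.card_filter_add_card_filter_not
      (s := (Finset.univ : Finset (Fin K))) (p := fun i : Fin K => K - r ≤ (i : ℕ))
    rw [← hhiS] at h2
    rw [Finset.card_univ, Fintype.card_fin, hcardhi] at h2
    have hlo' : (Finset.filter (fun i : Fin K => ¬ (K - r ≤ (i : ℕ))) Finset.univ) = loS := by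
      rw [hloS]
    rw [hlo'] at h2
    omega
  have hdet : (B + C).det = ∏ i, mu i := by
    rw [hmuprod]
    have h := hA.1.det_eq_prod_eigenvalues
    simpa using h
  have hprodsplit : ∏ i, mu i = (∏ i ∈ hiS, mu i) * ∏ i ∈ loS, mu i :=
    (Finset.prod_filter_mul_prod_filter_not Finset.univ _ mu).symm
  have hKpos : (0:ℝ) < (K:ℝ) := by
    have h0 : 0 < K := by omega
    exact_mod_cast h0
  clear_value lam muB S r uB vA t σ mu t' hiS loS
  rcases Nat.eq_zero_or_pos r with hr0 | hrpos
  · -- r = 0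
    have hBtr0 : B.trace = 0 := by
      have hSempty : S = ∅ := Finset.card_eq_zero.mp (by rw [← hrdef, hr0])
      rw [htrBeq]
      refine Finset.sum_eq_zero fun s _ => ?_
      by_contra hne
      have hmem : s ∈ S := by
        rw [hS]
        exact Finset.mem_filter.mpr ⟨Finset.mem_univ s, hne⟩
      rw [hSempty] at hmem
      exact absurd hmem (Finset.notMem_empty s)
    have hall : ∏ i, mu i ≤ (C.trace / (K:ℝ)) ^ K := by
      refine prod_le_pow_of_sum_le Finset.univ mu (fun i _ => hmu0 i) K
        (by simp) (by omega) C.trace ?_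
      rw [hmueq, htrsplit, hBtr0, zero_add]
    have hCdiv : C.trace / (K:ℝ) ≤ δ ^ 2 := by
      rw [div_le_iff₀ hKpos]
      linarith [htrC]
    have hone : (1:ℝ) ≤ 2 ^ K := one_le_pow₀ (by norm_num)
    calc (B + C).det = ∏ i, mu i := hdet
      _ ≤ (C.trace / (K:ℝ)) ^ K := hall
      _ ≤ (δ ^ 2) ^ K := pow_le_pow_left₀ (div_nonneg htrC0 hKpos.le) hCdiv K
      _ = δ ^ (2 * K) := by rw [← pow_mul]
      _ ≤ δ ^ (2 * (K - m)) := pow_le_pow_of_le_one hδ0 hδ1 (by omega)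
      _ ≤ 2 ^ K * δ ^ (2 * (K - m)) :=
          le_mul_of_one_le_left (pow_nonneg hδ0 _) hone
  · -- r ≥ 1
    have hkrpos : (0:ℝ) < ((K - r : ℕ):ℝ) := by
      have h0 : 0 < K - r := by omega
      exact_mod_cast h0
    have hlo_le : ∏ i ∈ loS, mu i ≤ (C.trace / ((K - r : ℕ):ℝ)) ^ (K - r) :=
      prod_le_pow_of_sum_le loS mu (fun i _ => hmu0 i) (K - r) hcardlo (by omega) C.trace hbot
    have hhi_le : ∏ i ∈ hiS, mu i ≤ ((K:ℝ) / (r:ℝ)) ^ r := by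
      refine prod_le_pow_of_sum_le hiS mu (fun i _ => hmu0 i) r hcardhi hrpos (K:ℝ) ?_
      have hsub : ∑ i ∈ hiS, mu i ≤ ∑ i, mu i :=
        Finset.sum_le_sum_of_subset_of_nonneg (Finset.subset_univ hiS)
          (fun i _ _ => hmu0 i)
      rw [hmueq] at hsub
      exact le_trans hsub htrA
    have hlo_le2 : ∏ i ∈ loS, mu i ≤ ((K:ℝ) * δ ^ 2 / ((K - r : ℕ):ℝ)) ^ (K - r) := by
      refine le_trans hlo_le (pow_le_pow_left₀ (div_nonneg htrC0 hkrpos.le) ?_ _)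
      exact (div_le_div_iff_of_pos_right hkrpos).mpr htrC
    have hsplit2 : ((K:ℝ) * δ ^ 2 / ((K - r : ℕ):ℝ)) ^ (K - r)
        = ((K:ℝ) / ((K - r : ℕ):ℝ)) ^ (K - r) * (δ ^ 2) ^ (K - r) := by
      rw [← mul_pow]
      congr 1
      field_simp
    have hrltK : r < K := lt_of_le_of_lt hrm hmK
    have hent := entropy_bound hrpos hrltK
    calc (B + C).det = ∏ i, mu i := hdet
      _ = (∏ i ∈ hiS, mu i) * ∏ i ∈ loS, mu i := hprodsplit
      _ ≤ ((K:ℝ) / (r:ℝ)) ^ r * (((K:ℝ) * δ ^ 2) / ((K - r : ℕ):ℝ)) ^ (K - r) := by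
          refine mul_le_mul hhi_le hlo_le2 (Finset.prod_nonneg fun i _ => hmu0 i)
            (by positivity)
      _ = (((K:ℝ) / (r:ℝ)) ^ r * ((K:ℝ) / ((K - r : ℕ):ℝ)) ^ (K - r)) * (δ ^ 2) ^ (K - r) := by
          rw [hsplit2]
          ring
      _ ≤ 2 ^ K * (δ ^ 2) ^ (K - r) :=
          mul_le_mul_of_nonneg_right hent (by positivity)
      _ = 2 ^ K * δ ^ (2 * (K - r)) := by rw [← pow_mul]
      _ ≤ 2 ^ K * δ ^ (2 * (K - m)) := by
          refine mul_le_mul_of_nonneg_left (pow_le_pow_of_le_one hδ0 hδ1 (by omega))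
            (by positivity)

lemma prod_dist_sq_le {K m : ℕ} (hmK : m < K) (g : Fin K → H) (U : Submodule ℝ H)
    [FiniteDimensional ℝ U] (hU : Module.finrank ℝ U ≤ m)
    (hg1 : ∀ i, ‖g i‖ ≤ 1) (δ : ℝ) (hδ0 : 0 ≤ δ) (hδ1 : δ ≤ 1)
    (hgU : ∀ i, Metric.infDist (g i) (U : Set H) ≤ δ) :
    ∏ i, Metric.infDist (g i) (span ℝ (g '' Set.Iio i) : Set H) ^ 2
      ≤ 2 ^ K * δ ^ (2 * (K - m)) := by
  set b : Fin K → H := fun i => ((orthogonalProjection U (g i) : U) : H) with hb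
  set c : Fin K → H := fun i => g i - b i with hc
  have hbU : ∀ i, b i ∈ U := fun i => (orthogonalProjection U (g i)).2
  have hcperp : ∀ i, c i ∈ Uᗮ := fun i => Submodule.sub_starProjection_mem_orthogonal (K := U) (g i)
  have hgsplit : ∀ i, g i = b i + c i := by
    intro i
    rw [hc]
    simp
  have hcnorm : ∀ i, ‖c i‖ ≤ δ := by
    intro i
    have he : Metric.infDist (g i) (U : Set H) = ‖c i‖ := infDist_eq_norm_sub_proj U (g i)
    rw [← he]
    exact hgU i
  have hbnorm : ∀ i, ‖b i‖ ≤ 1 := by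
    intro i
    have : ‖b i‖ ≤ ‖g i‖ := by
      have h2 : ‖g i‖ ^ 2 = ‖b i‖ ^ 2 + ‖c i‖ ^ 2 := by
        rw [hgsplit i, norm_add_sq_real, Submodule.inner_right_of_mem_orthogonal (hbU i)
          (hcperp i)]
        ring
      nlinarith [norm_nonneg (b i), norm_nonneg (c i), norm_nonneg (g i)]
    exact le_trans this (hg1 i)
  have hAeq : gram g = gram b + gram c := by
    ext i j
    simp only [Matrix.add_apply, gram_apply]
    have h1 : ⟪b i, c j⟫ = 0 :=
      Submodule.inner_right_of_mem_orthogonal (hbU i) (hcperp j)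
    have h2 : ⟪c i, b j⟫ = 0 := by
      rw [real_inner_comm]
      exact Submodule.inner_right_of_mem_orthogonal (hbU j) (hcperp i)
    rw [hgsplit i, hgsplit j, inner_add_left, inner_add_right, inner_add_right, h1, h2]
    ring
  have htrA : (gram b + gram c).trace ≤ (K:ℝ) := by
    rw [← hAeq]
    have : (gram g).trace = ∑ i, ‖g i‖ ^ 2 := by
      simp [Matrix.trace, Matrix.diag, gram_apply, real_inner_self_eq_norm_sq]
    rw [this]
    calc ∑ i, ‖g i‖ ^ 2 ≤ ∑ _i : Fin K, (1:ℝ) :=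
          Finset.sum_le_sum fun i _ => pow_le_one₀ (norm_nonneg _) (hg1 i)
      _ = K := by simp
  have htrC : (gram c).trace ≤ (K:ℝ) * δ ^ 2 := by
    have : (gram c).trace = ∑ i, ‖c i‖ ^ 2 := by
      simp [Matrix.trace, Matrix.diag, gram_apply, real_inner_self_eq_norm_sq]
    rw [this]
    calc ∑ i, ‖c i‖ ^ 2 ≤ ∑ _i : Fin K, δ ^ 2 :=
          Finset.sum_le_sum fun i _ => pow_le_pow_left₀ (norm_nonneg _) (hcnorm i) 2
      _ = K * δ ^ 2 := by
          rw [Finset.sum_const, Finset.card_univ, Fintype.card_fin, nsmul_eq_mul]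
  have hrange : Module.finrank ℝ ↥(LinearMap.range (gram b).mulVecLin) ≤ m := by
    let φ : U →ₗ[ℝ] (Fin K → ℝ) :=
      { toFun := fun u => fun i => ⟪b i, (u : H)⟫
        map_add' := fun u v => by
          funext i
          simp [inner_add_right]
        map_smul' := fun r u => by
          funext i
          simp [real_inner_smul_right] }
    have hsub : LinearMap.range (gram b).mulVecLin ≤ LinearMap.range φ := by
      rintro y ⟨x, rfl⟩
      refine ⟨⟨∑ j, x j • b j, Submodule.sum_mem U fun j _ => Submodule.smul_mem U _ (hbU j)⟩,
        ?_⟩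
      funext i
      show ⟪b i, ∑ j, x j • b j⟫ = ((gram b).mulVecLin x) i
      rw [inner_sum, Matrix.mulVecLin_apply]
      simp only [Matrix.mulVec, dotProduct, real_inner_smul_right, gram_apply]
      exact Finset.sum_congr rfl fun j _ => mul_comm _ _
    haveI : FiniteDimensional ℝ ↥(LinearMap.range φ) := Module.Finite.range φ
    calc Module.finrank ℝ ↥(LinearMap.range (gram b).mulVecLin)
        ≤ Module.finrank ℝ ↥(LinearMap.range φ) := Submodule.finrank_mono hsub
      _ ≤ Module.finrank ℝ U := LinearMap.finrank_range_le φ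
      _ ≤ m := hU
  rw [← det_gram g, hAeq]
  exact det_add_le_of_rank_le hmK (gram b) (gram c) (gram_posSemidef b) (gram_posSemidef c)
    hrange htrA δ hδ0 hδ1 htrC

lemma le_infDist' {s : Set H} (hs : s.Nonempty) {x : H} {b : ℝ}
    (h : ∀ y ∈ s, b ≤ dist x y) : b ≤ Metric.infDist x s := by
  rw [Metric.infDist_eq_iInf]
  haveI : Nonempty s := hs.to_subtype
  exact le_ciInf fun y => h y y.2

end GreedyWSH

open GreedyWSH

/-- Kolmogorov `n`-width (real-valued) of a set `F` in a Hilbert space. -/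
noncomputable def dnWidth {H : Type*} [NormedAddCommGroup H] [InnerProductSpace ℝ H]
    (n : ℕ) (F : Set H) : ℝ :=
  ⨅ G : {G : Submodule ℝ H // FiniteDimensional ℝ G ∧ Module.finrank ℝ G ≤ n},
    ⨆ f : F, Metric.infDist (f : H) ((G : Submodule ℝ H) : Set H)

/-- Decay of the geometric mean of greedy distances under exponential Kolmogorov
width decay (Corollary 2, Wenzel–Santin–Haasdonk 2021, exponential case), with
`c₁ = 2^{-(2+α)} c₀`. -/
theorem greedy_geometric_mean_decay_exponential {H : Type*} [NormedAddCommGroup H]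
    [InnerProductSpace ℝ H] [CompleteSpace H]
    (F : Set H) (hFc : IsCompact F) (hF1 : ∀ f ∈ F, ‖f‖ ≤ 1)
    (f : ℕ → H) (hf : ∀ n, f n ∈ F)
    (ν : ℕ → ℝ)
    (hν : ∀ n, ν n = Metric.infDist (f n)
      ((Submodule.span ℝ (f '' Set.Iio n) : Submodule ℝ H) : Set H))
    (C₀ c₀ α : ℝ) (hC₀ : 0 < C₀) (hc₀ : 0 < c₀) (hα : 0 < α)
    (hd : ∀ n : ℕ, 1 ≤ n → dnWidth n F ≤ C₀ * Real.exp (-c₀ * (n : ℝ) ^ α))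
    (n : ℕ) (hn : 2 ≤ n) :
    (∏ i ∈ Finset.Icc (n + 1) (2 * n), ν i) ^ ((n : ℝ)⁻¹)
      ≤ Real.sqrt (2 * max 1 C₀) *
        Real.exp (-((2 : ℝ) ^ (-(2 + α)) * c₀) * (n : ℝ) ^ α) := by
  classical
  set m : ℕ := (n + 1) / 2 with hm
  have hm1 : 1 ≤ m := by omega
  have hmn : m < n := by omega
  have hnm2 : 2 * (n - m) ≤ n := by omega
  have hnm3 : n ≤ 3 * (n - m) := by omega
  have hn2m : n ≤ 2 * m := by omega
  have hnR : (0:ℝ) < (n:ℝ) := by exact_mod_cast (by omega : 0 < n)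
  have hnα : (0:ℝ) < (n:ℝ) ^ α := Real.rpow_pos_of_pos hnR α
  have h2α : (0:ℝ) < (2:ℝ) ^ (-α) := Real.rpow_pos_of_pos two_pos _
  set E : ℝ := (n:ℝ) ^ α * (2:ℝ) ^ (-α) with hE
  have hEpos : 0 < E := mul_pos hnα h2α
  set ε : ℝ := C₀ * Real.exp (-c₀ * (m:ℝ) ^ α) with hε
  have hεpos : 0 < ε := mul_pos hC₀ (Real.exp_pos _)
  set κ : ℝ := Real.exp (c₀ * E / 6) with hκ
  have hκ1 : 1 < κ := Real.one_lt_exp_iff.mpr (by positivity)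
  have hεκ : 0 < ε * κ := mul_pos hεpos (lt_trans one_pos hκ1)
  -- extract a good subspace G₀ of dimension ≤ m
  have hwidth0 : dnWidth m F < ε * κ := by
    refine lt_of_le_of_lt (hd m hm1) ?_
    rw [← hε]
    nlinarith
  haveI hNE : Nonempty {G : Submodule ℝ H // FiniteDimensional ℝ G ∧ Module.finrank ℝ G ≤ m} :=
    ⟨⟨⊥, inferInstance, by simp⟩⟩
  rw [dnWidth] at hwidth0
  obtain ⟨⟨G₀, hG₀fin, hG₀rank⟩, hsup⟩ := exists_lt_of_ciInf_lt hwidth0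
  haveI : FiniteDimensional ℝ G₀ := hG₀fin
  have hG₀dist : ∀ x ∈ F, Metric.infDist x (G₀ : Set H) ≤ ε * κ := by
    intro x hx
    have hbdd : BddAbove (Set.range fun y : F => Metric.infDist (y : H) (G₀ : Set H)) := by
      refine ⟨1, ?_⟩
      rintro _ ⟨y, rfl⟩
      calc Metric.infDist (y:H) (G₀ : Set H) ≤ dist (y:H) 0 :=
            Metric.infDist_le_dist_of_mem (Submodule.zero_mem G₀)
        _ = ‖(y:H)‖ := by rw [dist_zero_right]
        _ ≤ 1 := hF1 y y.2
    have hle := le_ciSup hbdd (⟨x, hx⟩ : F)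
    exact le_of_lt (lt_of_le_of_lt hle hsup)
  -- the space V and the reduced vectors u
  set V : Submodule ℝ H := Submodule.span ℝ (f '' Set.Iio (n+1)) with hV
  haveI : FiniteDimensional ℝ V :=
    FiniteDimensional.span_of_finite ℝ ((Set.finite_Iio (n+1)).image f)
  set u : Fin n → H :=
    fun j => f (n+1+(j:ℕ)) - ((orthogonalProjection V (f (n+1+(j:ℕ))) : V) : H) with hu
  have hν0 : ∀ i, 0 ≤ ν i := fun i => by
    rw [hν]
    exact Metric.infDist_nonneg
  -- step: ν (n+1+j) ≤ dist of u j to span of previous u's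
  have hν' : ∀ j : Fin n, ν (n+1+(j:ℕ)) ≤
      Metric.infDist (u j) ((Submodule.span ℝ (u '' Set.Iio j) : Submodule ℝ H) : Set H) := by
    intro j
    rw [hν (n+1+(j:ℕ))]
    refine le_infDist' ⟨0, Submodule.zero_mem _⟩ ?_
    intro y hy
    set W : Submodule ℝ H := Submodule.span ℝ (f '' Set.Iio (n+1+(j:ℕ))) with hW
    have hV_le : V ≤ W := by
      rw [hV, hW]
      exact Submodule.span_mono (Set.image_mono (Set.Iio_subset_Iio (by omega)))
    have hspan_le : Submodule.span ℝ (u '' Set.Iio j) ≤ W := by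
      rw [Submodule.span_le]
      rintro _ ⟨j', hj', rfl⟩
      have hj'j : (j' : Fin n) < j := hj'
      have hf_mem : f (n+1+(j':ℕ)) ∈ W := by
        rw [hW]
        refine Submodule.subset_span ⟨n+1+(j':ℕ), ?_, rfl⟩
        have : (j' : ℕ) < (j : ℕ) := hj'j
        simp only [Set.mem_Iio]
        omega
      exact Submodule.sub_mem W hf_mem
        (hV_le (orthogonalProjection V (f (n+1+(j':ℕ)))).2)
    have hyW : y ∈ W := hspan_le hy
    have hPW : ((orthogonalProjection V (f (n+1+(j:ℕ))) : V) : H) ∈ W :=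
      hV_le (orthogonalProjection V (f (n+1+(j:ℕ)))).2
    calc Metric.infDist (f (n+1+(j:ℕ))) (W : Set H)
        ≤ dist (f (n+1+(j:ℕ)))
            (y + ((orthogonalProjection V (f (n+1+(j:ℕ))) : V) : H)) :=
          Metric.infDist_le_dist_of_mem (Submodule.add_mem W hyW hPW)
      _ = dist (u j) y := by
          rw [dist_eq_norm, dist_eq_norm]
          congr 1
          rw [hu, sub_add_eq_sub_sub, sub_right_comm]
  have hu1 : ∀ j, ‖u j‖ ≤ 1 := by
    intro j
    have h1 : Metric.infDist (f (n+1+(j:ℕ))) (V : Set H) = ‖u j‖ :=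
      infDist_eq_norm_sub_proj V _
    rw [← h1]
    calc Metric.infDist (f (n+1+(j:ℕ))) (V : Set H) ≤ dist (f (n+1+(j:ℕ))) 0 :=
          Metric.infDist_le_dist_of_mem (Submodule.zero_mem V)
      _ = ‖f (n+1+(j:ℕ))‖ := by rw [dist_zero_right]
      _ ≤ 1 := hF1 _ (hf _)
  -- the perturbed subspace U
  set T : H →ₗ[ℝ] H :=
    LinearMap.id - V.subtype ∘ₗ (orthogonalProjection V : H →L[ℝ] V).toLinearMap with hT
  have hTapply : ∀ z, T z = z - ((orthogonalProjection V z : V) : H) := by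
    intro z
    simp [hT, LinearMap.sub_apply]
  have hTnorm : ∀ z, ‖T z‖ ≤ ‖z‖ := by
    intro z
    rw [hTapply, ← infDist_eq_norm_sub_proj]
    calc Metric.infDist z (V : Set H) ≤ dist z 0 :=
          Metric.infDist_le_dist_of_mem (Submodule.zero_mem V)
      _ = ‖z‖ := by rw [dist_zero_right]
  set U : Submodule ℝ H := G₀.map T with hU
  haveI : FiniteDimensional ℝ U := Module.Finite.map G₀ T
  have hUrank : Module.finrank ℝ U ≤ m := le_trans (Submodule.finrank_map_le T G₀) hG₀rank
  set δ' : ℝ := min 1 (ε * κ) with hδ'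
  have hδ'0 : 0 ≤ δ' := le_min zero_le_one hεκ.le
  have hδ'1 : δ' ≤ 1 := min_le_left _ _
  have hUdist : ∀ j, Metric.infDist (u j) (U : Set H) ≤ δ' := by
    intro j
    refine le_min ?_ ?_
    · calc Metric.infDist (u j) (U : Set H) ≤ dist (u j) 0 :=
            Metric.infDist_le_dist_of_mem (Submodule.zero_mem U)
        _ = ‖u j‖ := by rw [dist_zero_right]
        _ ≤ 1 := hu1 j
    · have h2 : Metric.infDist (u j) (U : Set H)
          ≤ Metric.infDist (f (n+1+(j:ℕ))) (G₀ : Set H) := by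
        refine le_infDist' ⟨0, Submodule.zero_mem _⟩ ?_
        intro w hw
        have hTw : T w ∈ U := Submodule.mem_map_of_mem hw
        have huT : u j = T (f (n+1+(j:ℕ))) := by rw [hTapply, hu]
        calc Metric.infDist (u j) (U : Set H) ≤ dist (u j) (T w) :=
              Metric.infDist_le_dist_of_mem hTw
          _ = ‖T (f (n+1+(j:ℕ))) - T w‖ := by rw [dist_eq_norm, huT]
          _ = ‖T (f (n+1+(j:ℕ)) - w)‖ := by rw [map_sub]
          _ ≤ ‖f (n+1+(j:ℕ)) - w‖ := hTnorm _
          _ = dist (f (n+1+(j:ℕ))) w := (dist_eq_norm _ _).symm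
      exact le_trans h2 (hG₀dist _ (hf _))
  -- main product bound
  have Hbound := prod_dist_sq_le hmn u U hUrank hu1 δ' hδ'0 hδ'1 hUdist
  -- reindex the product
  have hprod1 : ∏ i ∈ Finset.Icc (n+1) (2*n), ν i = ∏ j : Fin n, ν (n+1+(j:ℕ)) := by
    rw [← Finset.Ico_add_one_right_eq_Icc, Finset.prod_Ico_eq_prod_range,
      show 2*n+1 - (n+1) = n by omega, ← Fin.prod_univ_eq_prod_range (fun i => ν (n+1+i)) n]
  set D : ℝ := ∏ j : Fin n,
    Metric.infDist (u j) ((Submodule.span ℝ (u '' Set.Iio j) : Submodule ℝ H) : Set H) with hD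
  have hD0 : 0 ≤ D := Finset.prod_nonneg fun j _ => Metric.infDist_nonneg
  have hPD : ∏ j : Fin n, ν (n+1+(j:ℕ)) ≤ D :=
    Finset.prod_le_prod (fun j _ => hν0 _) (fun j _ => hν' j)
  have hD2 : D ^ 2 = ∏ j : Fin n,
      Metric.infDist (u j) ((Submodule.span ℝ (u '' Set.Iio j) : Submodule ℝ H) : Set H) ^ 2 := by
    rw [hD, ← Finset.prod_pow]
  set R : ℝ := Real.sqrt 2 ^ n * δ' ^ (n - m) with hR
  have hR0 : 0 ≤ R := by positivity
  have hR2 : R ^ 2 = 2 ^ n * δ' ^ (2*(n-m)) := by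
    rw [hR, mul_pow, ← pow_mul, ← pow_mul, mul_comm n 2, mul_comm (n-m) 2, pow_mul,
      Real.sq_sqrt (by norm_num : (0:ℝ) ≤ 2)]
  have hDR : D ≤ R := by
    have hd2 : D ^ 2 ≤ R ^ 2 := by
      rw [hD2, hR2]
      exact Hbound
    nlinarith
  have hP0 : 0 ≤ ∏ i ∈ Finset.Icc (n+1) (2*n), ν i :=
    Finset.prod_nonneg fun i _ => hν0 i
  have hPR : ∏ i ∈ Finset.Icc (n+1) (2*n), ν i ≤ R := by
    rw [hprod1]
    exact le_trans hPD hDR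
  have hmain : (∏ i ∈ Finset.Icc (n+1) (2*n), ν i) ^ ((n:ℝ)⁻¹) ≤ R ^ ((n:ℝ)⁻¹) :=
    Real.rpow_le_rpow hP0 hPR (by positivity)
  set θ : ℝ := ((n - m : ℕ):ℝ) * (n:ℝ)⁻¹ with hθ
  have hθ0 : 0 ≤ θ := by positivity
  have hRn : R ^ ((n:ℝ)⁻¹) = Real.sqrt 2 * δ' ^ θ := by
    rw [hR, Real.mul_rpow (by positivity) (by positivity)]
    congr 1
    · rw [← Real.rpow_natCast (Real.sqrt 2) n, ← Real.rpow_mul (Real.sqrt_nonneg 2),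
        mul_inv_cancel₀ hnR.ne', Real.rpow_one]
    · rw [← Real.rpow_natCast δ' (n - m), ← Real.rpow_mul hδ'0]
  -- numeric estimates on θ
  have hθhalf : θ ≤ 1/2 := by
    have hc : (2:ℝ) * ((n - m:ℕ):ℝ) ≤ (n:ℝ) := by exact_mod_cast hnm2
    rw [hθ, ← div_eq_mul_inv, div_le_iff₀ hnR]
    linarith
  have hθ3 : 1/3 ≤ θ := by
    have hc : (n:ℝ) ≤ 3 * ((n - m:ℕ):ℝ) := by exact_mod_cast hnm3
    rw [hθ, ← div_eq_mul_inv, le_div_iff₀ hnR]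
    linarith
  have hmα : E ≤ (m:ℝ)^α := by
    have hm2 : (n:ℝ)/2 ≤ (m:ℝ) := by
      have hc : (n:ℝ) ≤ 2*(m:ℝ) := by exact_mod_cast hn2m
      linarith
    have h1 : ((n:ℝ)/2) ^ α ≤ (m:ℝ)^α :=
      Real.rpow_le_rpow (by positivity) hm2 hα.le
    have h2 : ((n:ℝ)/2)^α = E := by
      rw [hE, Real.div_rpow hnR.le (by norm_num), Real.rpow_neg (by norm_num), div_eq_mul_inv]
    rw [← h2]
    exact h1
  have hmα0 : (0:ℝ) ≤ (m:ℝ)^α := Real.rpow_nonneg (by positivity) α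
  have h2a : (2:ℝ)^(-(2+α)) = (2:ℝ)^(-α) / 4 := by
    rw [show -(2+α) = (-α) + (-2:ℝ) by ring, Real.rpow_add (by norm_num : (0:ℝ) < 2)]
    have h4 : (2:ℝ)^(-2:ℝ) = 1/4 := by
      rw [show (-2:ℝ) = -((2:ℕ):ℝ) by norm_num, Real.rpow_neg (by norm_num),
        Real.rpow_natCast]
      norm_num
    rw [h4]
    ring
  have hcore : E * (1/3) ≤ (m:ℝ)^α * θ :=
    mul_le_mul hmα hθ3 (by norm_num) hmα0
  have hexp_key : c₀ * E / 6 * (1/2) + (-(c₀ * (m:ℝ)^α) * θ)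
      ≤ -((2:ℝ)^(-(2+α)) * c₀) * (n:ℝ)^α := by
    have hq : -((2:ℝ)^(-(2+α)) * c₀) * (n:ℝ)^α = -(c₀ * E / 4) := by
      rw [h2a, hE]
      ring
    rw [hq]
    nlinarith [mul_le_mul_of_nonneg_left hcore hc₀.le]
  -- final chain
  have hδθ : δ' ^ θ ≤ (max 1 C₀) ^ ((1:ℝ)/2) *
      Real.exp (-((2:ℝ)^(-(2+α)) * c₀) * (n:ℝ)^α) := by
    have s1 : δ' ^ θ ≤ (ε * κ) ^ θ :=
      Real.rpow_le_rpow hδ'0 (min_le_right _ _) hθ0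
    have s2 : (ε * κ) ^ θ = ε ^ θ * κ ^ θ := Real.mul_rpow hεpos.le (le_of_lt (lt_trans one_pos hκ1))
    have s3 : ε ^ θ = C₀ ^ θ * Real.exp ((-c₀ * (m:ℝ)^α) * θ) := by
      rw [hε, Real.mul_rpow hC₀.le (Real.exp_pos _).le, ← Real.exp_mul]
    have s4 : κ ^ θ ≤ κ ^ ((1:ℝ)/2) :=
      Real.rpow_le_rpow_of_exponent_le hκ1.le hθhalf
    have s5 : C₀ ^ θ ≤ (max 1 C₀) ^ ((1:ℝ)/2) := by
      calc C₀ ^ θ ≤ (max 1 C₀) ^ θ :=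
            Real.rpow_le_rpow hC₀.le (le_max_right 1 C₀) hθ0
        _ ≤ (max 1 C₀) ^ ((1:ℝ)/2) :=
            Real.rpow_le_rpow_of_exponent_le (le_max_left 1 C₀) hθhalf
    have s6 : κ ^ ((1:ℝ)/2) * Real.exp ((-c₀ * (m:ℝ)^α) * θ)
        = Real.exp (c₀ * E / 6 * (1/2) + (-(c₀ * (m:ℝ)^α) * θ)) := by
      rw [hκ, ← Real.exp_mul, ← Real.exp_add]
      norm_num
    have s7 : Real.exp (c₀ * E / 6 * (1/2) + (-(c₀ * (m:ℝ)^α) * θ))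
        ≤ Real.exp (-((2:ℝ)^(-(2+α)) * c₀) * (n:ℝ)^α) :=
      Real.exp_le_exp.mpr hexp_key
    calc δ' ^ θ ≤ ε ^ θ * κ ^ θ := by rw [← s2]; exact s1
      _ ≤ ε ^ θ * κ ^ ((1:ℝ)/2) := by
          refine mul_le_mul_of_nonneg_left s4 ?_
          positivity
      _ = C₀ ^ θ * (κ ^ ((1:ℝ)/2) * Real.exp ((-c₀ * (m:ℝ)^α) * θ)) := by
          rw [s3]
          ring
      _ ≤ (max 1 C₀) ^ ((1:ℝ)/2) * (κ ^ ((1:ℝ)/2) * Real.exp ((-c₀ * (m:ℝ)^α) * θ)) := by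
          refine mul_le_mul_of_nonneg_right s5 ?_
          positivity
      _ ≤ (max 1 C₀) ^ ((1:ℝ)/2) * Real.exp (-((2:ℝ)^(-(2+α)) * c₀) * (n:ℝ)^α) := by
          rw [s6]
          refine mul_le_mul_of_nonneg_left s7 ?_
          positivity
  have hsqrt : Real.sqrt (2 * max 1 C₀) = Real.sqrt 2 * (max 1 C₀) ^ ((1:ℝ)/2) := by
    rw [Real.sqrt_mul (by norm_num : (0:ℝ) ≤ 2)]
    congr 1
    exact Real.sqrt_eq_rpow _
  calc (∏ i ∈ Finset.Icc (n+1) (2*n), ν i) ^ ((n:ℝ)⁻¹)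
      ≤ R ^ ((n:ℝ)⁻¹) := hmain
    _ = Real.sqrt 2 * δ' ^ θ := hRn
    _ ≤ Real.sqrt 2 * ((max 1 C₀) ^ ((1:ℝ)/2) *
          Real.exp (-((2:ℝ)^(-(2+α)) * c₀) * (n:ℝ)^α)) := by
        refine mul_le_mul_of_nonneg_left hδθ ?_
        positivity
    _ = Real.sqrt (2 * max 1 C₀) * Real.exp (-((2:ℝ)^(-(2+α)) * c₀) * (n:ℝ)^α) := by
        rw [hsqrt]
        ring
end
end
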